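/- arXiv:1601.03424 — 7 statements merged into one kernel-verified Lean document; each statement's English description precedes it below -/
import Mathlib

section
/- Let F be a field and let P ∈ F[X] be a monic irreducible polynomial with P ≠ X. Then P fails to have good heredity over F if and only if there exist positive integers n_0 = 1 < n_1 < n_2 < ⋯ with n_i dividing n_{i+1} for every i, and monic irreducible polynomials Q_i ∈ F[X] such that each Q_i divides P(X^{n_i}) and, for every i, Q_{i+1} properly divides Q_i(X^{n_{i+1}/n_i}) (that is, Q_{i+1} divides it and deg Q_{i+1} < (n_{i+1}/n_i)·deg Q_i). -/
open Polynomial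

/-- `a` is a root of unity, i.e. a torsion element of the multiplicative monoid. -/
def IsRootOfUnityElem {F : Type*} [Monoid F] (a : F) : Prop := ∃ n : ℕ, 0 < n ∧ a ^ n = 1

/-- `P` is hereditarily irreducible over `F`: `P(X^n)` is irreducible for every `n ≥ 1`. -/
def HeredIrreducible {F : Type*} [Field F] (P : F[X]) : Prop :=
  ∀ n : ℕ, 0 < n → Irreducible (P.comp (X ^ n))

/-- `P` has good heredity over `F`: some `P(X^n)` is a product of hereditarily
irreducible polynomials. -/
def HasGoodHeredity {F : Type*} [Field F] (P : F[X]) : Prop :=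
  ∃ n : ℕ, 0 < n ∧ ∃ l : Multiset F[X],
    (∀ Q ∈ l, HeredIrreducible Q) ∧ P.comp (X ^ n) = l.prod

/-- `a` is rootless in `F`: only finitely many positive `n` admit a solution of `x^n = a`. -/
def RootlessElem {F : Type*} [Field F] (a : F) : Prop :=
  {n : ℕ | 0 < n ∧ ∃ x : F, x ^ n = a}.Finite

/-- `a` is rootless modtor in `F`: only finitely many positive `n` admit a root of unity `ζ`
and `g` with `g^n = ζ * a`. -/
def RootlessModtorElem {F : Type*} [Field F] (a : F) : Prop :=
  {n : ℕ | 0 < n ∧ ∃ ζ g : F, IsRootOfUnityElem ζ ∧ g ^ n = ζ * a}.Finite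

/-- `a` is very rootless: it is not a proper power. -/
def VeryRootless {F : Type*} [Field F] (a : F) : Prop :=
  ¬ ∃ (g : F) (n : ℕ), 2 ≤ n ∧ a = g ^ n

/-- `a` is very rootless modtor: it is not a proper power times a root of unity. -/
def VeryRootlessModtor {F : Type*} [Field F] (a : F) : Prop :=
  ¬ ∃ (ζ g : F) (n : ℕ), IsRootOfUnityElem ζ ∧ 2 ≤ n ∧ a = ζ * g ^ n

/-- A field is rootless if all its elements that are neither zero nor roots of unity are. -/
def RootlessField (F : Type*) [Field F] : Prop :=
  ∀ a : F, a ≠ 0 → ¬ IsRootOfUnityElem a → RootlessElem a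

/-- A field is rootless modtor if all its elements that are neither zero nor
roots of unity are. -/
def RootlessModtorField (F : Type*) [Field F] : Prop :=
  ∀ a : F, a ≠ 0 → ¬ IsRootOfUnityElem a → RootlessModtorElem a

/-- A field has good heredity if every polynomial none of whose roots in an algebraic
closure is zero or a root of unity has good heredity. -/
def GoodHeredityField (F : Type*) [Field F] : Prop :=
  ∀ P : F[X],
    (∀ b : AlgebraicClosure F, Polynomial.aeval b P = 0 → b ≠ 0 ∧ ¬ IsRootOfUnityElem b) →
    HasGoodHeredity P

section Aux

open UniqueFactorizationMonoid

variable {F : Type*} [Field F]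

lemma aux_comp_comp (p : F[X]) (a b : ℕ) :
    (p.comp (X ^ a)).comp (X ^ b) = p.comp (X ^ (b * a)) := by
  rw [Polynomial.comp_assoc, Polynomial.X_pow_comp, ← pow_mul]

lemma aux_dvd_comp {p q : F[X]} (h : p ∣ q) (r : F[X]) : p.comp r ∣ q.comp r := by
  obtain ⟨c, rfl⟩ := h
  exact ⟨c.comp r, (Polynomial.mul_comp p c r)⟩

lemma aux_monic_comp {p : F[X]} (hp : p.Monic) {k : ℕ} (hk : 0 < k) :
    (p.comp (X ^ k)).Monic :=
  hp.comp (monic_X_pow k) (by simp [Polynomial.natDegree_X_pow]; omega)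

lemma aux_natDegree_comp (p : F[X]) (k : ℕ) :
    (p.comp (X ^ k)).natDegree = p.natDegree * k := by
  rw [Polynomial.natDegree_comp, Polynomial.natDegree_X_pow]

lemma aux_assoc_comp {p q : F[X]} (h : Associated p q) (r : F[X]) :
    Associated (p.comp r) (q.comp r) := by
  obtain ⟨u, hu⟩ := h
  obtain ⟨c, hc, hcu⟩ := Polynomial.isUnit_iff.mp u.isUnit
  have : q.comp r = p.comp r * Polynomial.C c := by
    rw [← hu, Polynomial.mul_comp, ← hcu, Polynomial.C_comp]
  rw [this]
  exact (associated_mul_unit_right _ _ (Polynomial.isUnit_C.mpr hc))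

lemma aux_hered_comp {p : F[X]} (hp : HeredIrreducible p) {k : ℕ} (hk : 0 < k) :
    HeredIrreducible (p.comp (X ^ k)) := by
  intro m hm
  rw [aux_comp_comp]
  exact hp (m * k) (Nat.mul_pos hm hk)

lemma aux_hered_irred {p : F[X]} (hp : HeredIrreducible p) : Irreducible p := by
  have := hp 1 one_pos
  rwa [pow_one, Polynomial.comp_X] at this

lemma aux_goodHered_mul {p q : F[X]} (hp : HasGoodHeredity p) (hq : HasGoodHeredity q) :
    HasGoodHeredity (p * q) := by
  obtain ⟨m, hm, la, hla, ha⟩ := hp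
  obtain ⟨m', hm', lb, hlb, hb⟩ := hq
  refine ⟨m * m', Nat.mul_pos hm hm',
    la.map (fun r => r.comp (X ^ m')) + lb.map (fun r => r.comp (X ^ m)), ?_, ?_⟩
  · intro R hR
    rcases Multiset.mem_add.mp hR with h1 | h1
    · obtain ⟨r, hr, rfl⟩ := Multiset.mem_map.mp h1
      exact aux_hered_comp (hla r hr) hm'
    · obtain ⟨r, hr, rfl⟩ := Multiset.mem_map.mp h1
      exact aux_hered_comp (hlb r hr) hm
  · rw [Polynomial.mul_comp, Multiset.prod_add]
    congr 1
    · rw [show m * m' = m' * m from mul_comm m m', ← aux_comp_comp, ha,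
        Polynomial.multiset_prod_comp]
    · rw [← aux_comp_comp, hb, Polynomial.multiset_prod_comp]

lemma aux_goodHered_prod {l : Multiset F[X]} (h : ∀ q ∈ l, HasGoodHeredity q) :
    HasGoodHeredity l.prod := by
  induction l using Multiset.induction with
  | empty => exact ⟨1, one_pos, 0, by simp, by simp⟩
  | cons a s ih =>
      rw [Multiset.prod_cons]
      exact aux_goodHered_mul (h a (Multiset.mem_cons_self a s))
        (ih fun q hq => h q (Multiset.mem_cons_of_mem hq))

/-- The key step: a bad monic irreducible has a bad proper factor at some level. -/
lemma aux_step {Q : F[X]} (hmQ : Q.Monic) (hQ : Irreducible Q) (hbad : ¬ HasGoodHeredity Q) :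
    ∃ k R, 2 ≤ k ∧ Polynomial.Monic R ∧ Irreducible R ∧ R ∣ Q.comp (X ^ k) ∧
      R.natDegree < k * Q.natDegree ∧ ¬ HasGoodHeredity R := by
  classical
  have hnh : ∃ k, 0 < k ∧ ¬ Irreducible (Q.comp (X ^ k)) := by
    by_contra h
    push_neg at h
    exact hbad ⟨1, one_pos, {Q}, by
      intro R hR
      rw [Multiset.mem_singleton] at hR
      subst hR
      exact fun n hn => h n hn, by simp⟩
  obtain ⟨k, hk, hred⟩ := hnh
  have hk2 : 2 ≤ k := by
    by_contra h
    have : k = 1 := by omega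
    subst this
    rw [pow_one, Polynomial.comp_X] at hred
    exact hred hQ
  have hAm : (Q.comp (X ^ k)).Monic := aux_monic_comp hmQ hk
  have hA0 : Q.comp (X ^ k) ≠ 0 := hAm.ne_zero
  have hAdeg : (Q.comp (X ^ k)).natDegree = Q.natDegree * k := aux_natDegree_comp Q k
  have hMmon : ∀ R ∈ normalizedFactors (Q.comp (X ^ k)), Polynomial.Monic R := by
    intro R hR
    have h0 : R ≠ 0 := by
      intro h
      rw [h] at hR
      exact zero_notMem_normalizedFactors _ hR
    have := normalize_normalized_factor R hR
    rw [← this]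
    exact Polynomial.monic_normalize h0
  have hMprod : (normalizedFactors (Q.comp (X ^ k))).prod = Q.comp (X ^ k) :=
    Polynomial.eq_of_monic_of_associated
      (by simpa using Polynomial.monic_multiset_prod_of_monic _ id (by simpa using hMmon))
      hAm (prod_normalizedFactors hA0)
  have hQdeg : 0 < Q.natDegree := hQ.natDegree_pos
  have hcard : 2 ≤ Multiset.card (normalizedFactors (Q.comp (X ^ k))) := by
    by_contra hlt
    push_neg at hlt
    have h01 : Multiset.card (normalizedFactors (Q.comp (X ^ k))) = 0 ∨
        Multiset.card (normalizedFactors (Q.comp (X ^ k))) = 1 := by omega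
    rcases h01 with h | h
    · rw [Multiset.card_eq_zero] at h
      rw [h, Multiset.prod_zero] at hMprod
      have h0 : (Q.comp (X ^ k)).natDegree = 0 := by rw [← hMprod]; simp
      rw [hAdeg] at h0
      have := Nat.mul_pos hQdeg (show 0 < k by omega)
      omega
    · obtain ⟨R, hMR⟩ := Multiset.card_eq_one.mp h
      have hRM : R ∈ normalizedFactors (Q.comp (X ^ k)) := by
        rw [hMR]; exact Multiset.mem_singleton_self R
      have hAR : Q.comp (X ^ k) = R := by rw [← hMprod, hMR, Multiset.prod_singleton]
      exact hred (hAR ▸ irreducible_of_normalized_factor R hRM)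
  have hdegM : ∀ R ∈ normalizedFactors (Q.comp (X ^ k)), R.natDegree < k * Q.natDegree := by
    intro R hR
    obtain ⟨M', hMM⟩ := Multiset.exists_cons_of_mem hR
    have hM'mon : ∀ f ∈ M', f.Monic := by
      intro f hf
      exact hMmon f (by rw [hMM]; exact Multiset.mem_cons_of_mem hf)
    have hM'deg : 1 ≤ M'.prod.natDegree := by
      rw [Polynomial.natDegree_multiset_prod_of_monic _ hM'mon]
      have hcard' : 0 < Multiset.card M' := by
        rw [hMM, Multiset.card_cons] at hcard
        omega
      obtain ⟨S, hS⟩ := Multiset.card_pos_iff_exists_mem.mp hcard'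
      have h1 : 0 < S.natDegree := by
        have hSM : S ∈ normalizedFactors (Q.comp (X ^ k)) := by
          rw [hMM]; exact Multiset.mem_cons_of_mem hS
        exact (irreducible_of_normalized_factor S hSM).natDegree_pos
      have h2 : S.natDegree ≤ (M'.map Polynomial.natDegree).sum :=
        Multiset.single_le_sum (fun x _ => Nat.zero_le x) _ (Multiset.mem_map_of_mem _ hS)
      omega
    have hM'pm : M'.prod.Monic := by
      simpa using Polynomial.monic_multiset_prod_of_monic M' id hM'mon
    have hsum : (Q.comp (X ^ k)).natDegree = R.natDegree + M'.prod.natDegree := by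
      rw [← hMprod, hMM, Multiset.prod_cons, Polynomial.natDegree_mul
        (hMmon R hR).ne_zero hM'pm.ne_zero]
    rw [hAdeg] at hsum
    have hcomm : k * Q.natDegree = Q.natDegree * k := mul_comm _ _
    omega
  have hbadM : ∃ R ∈ normalizedFactors (Q.comp (X ^ k)), ¬ HasGoodHeredity R := by
    by_contra h
    push_neg at h
    have hGA : HasGoodHeredity (Q.comp (X ^ k)) := hMprod ▸ aux_goodHered_prod h
    obtain ⟨m, hm, l, hl, he⟩ := hGA
    rw [aux_comp_comp] at he
    exact hbad ⟨m * k, Nat.mul_pos hm hk, l, hl, he⟩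
  obtain ⟨R, hRM, hRbad⟩ := hbadM
  exact ⟨k, R, hk2, hMmon R hRM, irreducible_of_normalized_factor R hRM,
    dvd_of_mem_normalizedFactors hRM, hdegM R hRM, hRbad⟩

lemma aux_card_lt_of_dvd [DecidableEq F] {a b : F[X]} (ha : a ≠ 0) (hb : b ≠ 0) (h : a ∣ b)
    (hd : a.natDegree < b.natDegree) :
    Multiset.card (normalizedFactors a) < Multiset.card (normalizedFactors b) := by
  obtain ⟨c, rfl⟩ := h
  have hc : c ≠ 0 := right_ne_zero_of_mul hb
  have hcd : 0 < c.natDegree := by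
    rw [Polynomial.natDegree_mul ha hc] at hd
    omega
  have hcu : ¬ IsUnit c := by
    intro h
    obtain ⟨r, hr, rfl⟩ := Polynomial.isUnit_iff.mp h
    simp [Polynomial.natDegree_C] at hcd
  obtain ⟨x, hx⟩ := exists_mem_normalizedFactors hc hcu
  rw [normalizedFactors_mul ha hc, Multiset.card_add]
  have : 0 < Multiset.card (normalizedFactors c) :=
    Multiset.card_pos_iff_exists_mem.mpr ⟨x, hx⟩
  omega

lemma aux_card_comp_eq [DecidableEq F] {p : F[X]} (hp : p ≠ 0) {k : ℕ}
    (h : ∀ T ∈ normalizedFactors p, Irreducible (T.comp (X ^ k))) :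
    Multiset.card (normalizedFactors (p.comp (X ^ k)))
      = Multiset.card (normalizedFactors p) := by
  have h1 : Associated ((normalizedFactors p).prod) p := prod_normalizedFactors hp
  have h2 : Associated (((normalizedFactors p).map (fun T => T.comp (X ^ k))).prod)
      (p.comp (X ^ k)) := by
    have := aux_assoc_comp h1 (X ^ k)
    rwa [Polynomial.multiset_prod_comp] at this
  rw [← h2.normalizedFactors_eq, normalizedFactors_prod_eq]
  · simp
  · intro a ha
    obtain ⟨T, hT, rfl⟩ := Multiset.mem_map.mp ha
    exact h T hT

end Aux

/-- Auxiliary: pairs `(n, Q)` with `Q` a bad monic irreducible factor of `P(X^n)`. -/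
def BadPair {F : Type*} [Field F] (P : F[X]) :=
  {p : ℕ × F[X] // 0 < p.1 ∧ p.2.Monic ∧ Irreducible p.2 ∧ p.2 ∣ P.comp (X ^ p.1) ∧
    ¬ HasGoodHeredity p.2}

/-- `P` fails good heredity iff there is an infinite branch of proper divisions. -/
theorem stmt1 {F : Type*} [Field F] (P : F[X]) (hm : P.Monic) (hirr : Irreducible P)
    (hX : P ≠ X) :
    ¬ HasGoodHeredity P ↔
      ∃ (n : ℕ → ℕ) (Q : ℕ → F[X]),
        n 0 = 1 ∧ (∀ i, 0 < n i) ∧ (∀ i, n i < n (i + 1)) ∧ (∀ i, n i ∣ n (i + 1)) ∧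
        (∀ i, (Q i).Monic) ∧ (∀ i, Irreducible (Q i)) ∧
        (∀ i, Q i ∣ P.comp (X ^ n i)) ∧
        (∀ i, Q (i + 1) ∣ (Q i).comp (X ^ (n (i + 1) / n i)) ∧
          (Q (i + 1)).natDegree < (n (i + 1) / n i) * (Q i).natDegree) := by
  classical
  constructor
  · intro hbad
    have hstep : ∀ t : BadPair P, ∃ t' : BadPair P,
        t.1.1 ∣ t'.1.1 ∧ t.1.1 < t'.1.1 ∧
        t'.1.2 ∣ t.1.2.comp (X ^ (t'.1.1 / t.1.1)) ∧
        t'.1.2.natDegree < (t'.1.1 / t.1.1) * t.1.2.natDegree := by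
      rintro ⟨⟨m, Qm⟩, hmpos, hmon, hirr', hdvd, hb⟩
      obtain ⟨k, R, hk2, hRm, hRirr, hRdvd, hRdeg, hRbad⟩ := aux_step hmon hirr' hb
      have hdiv : m * k / m = k := Nat.mul_div_cancel_left k hmpos
      refine ⟨⟨(m * k, R), Nat.mul_pos hmpos (by omega), hRm, hRirr, ?_, hRbad⟩,
        ⟨k, rfl⟩, ?_, ?_, ?_⟩
      · have h1 : Qm.comp (X ^ k) ∣ (P.comp (X ^ m)).comp (X ^ k) := aux_dvd_comp hdvd _
        rw [aux_comp_comp] at h1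
        exact dvd_trans hRdvd (by rwa [mul_comm k m] at h1)
      · exact (Nat.lt_mul_iff_one_lt_right hmpos).mpr (by omega)
      · simpa [hdiv] using hRdvd
      · simpa [hdiv] using hRdeg
    choose f hf1 hf2 hf3 hf4 using hstep
    have hP1 : P ∣ P.comp (X ^ 1) := by rw [pow_one, Polynomial.comp_X]
    let t0 : BadPair P := ⟨(1, P), one_pos, hm, hirr, hP1, hbad⟩
    let g : ℕ → BadPair P := fun i => f^[i] t0
    have hgs : ∀ i, g (i + 1) = f (g i) := fun i => Function.iterate_succ_apply' f i t0
    refine ⟨fun i => (g i).1.1, fun i => (g i).1.2, rfl, fun i => (g i).2.1, ?_, ?_,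
      fun i => (g i).2.2.1, fun i => (g i).2.2.2.1, fun i => (g i).2.2.2.2.1, ?_⟩
    · intro i
      show (g i).1.1 < (g (i + 1)).1.1
      rw [hgs i]; exact hf2 (g i)
    · intro i
      show (g i).1.1 ∣ (g (i + 1)).1.1
      rw [hgs i]; exact hf1 (g i)
    · intro i
      show (g (i + 1)).1.2 ∣ (g i).1.2.comp (X ^ ((g (i + 1)).1.1 / (g i).1.1)) ∧
        (g (i + 1)).1.2.natDegree < ((g (i + 1)).1.1 / (g i).1.1) * (g i).1.2.natDegree
      rw [hgs i]; exact ⟨hf3 (g i), hf4 (g i)⟩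
  · rintro ⟨n, Q, hn0, hnpos, hnlt, hndvd, hQm, hQirr, hQP, hstep'⟩ hgood
    obtain ⟨m, hmpos, l, hl, hprod⟩ := hgood
    have key : ∀ i, Multiset.card (UniqueFactorizationMonoid.normalizedFactors
          ((Q (i + 1)).comp (X ^ m))) <
        Multiset.card (UniqueFactorizationMonoid.normalizedFactors ((Q i).comp (X ^ m))) := by
      intro i
      set k := n (i + 1) / n i with hk
      have hkpos : 0 < k := Nat.div_pos (le_of_lt (hnlt i)) (hnpos i)
      have hAm : ((Q i).comp (X ^ m)).Monic := aux_monic_comp (hQm i) hmpos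
      have hfacts : ∀ T ∈ UniqueFactorizationMonoid.normalizedFactors ((Q i).comp (X ^ m)),
          Irreducible (T.comp (X ^ k)) := by
        intro T hT
        have hTd : T ∣ (l.map (fun S => S.comp (X ^ n i))).prod := by
          have h1 : (Q i).comp (X ^ m) ∣ (P.comp (X ^ n i)).comp (X ^ m) :=
            aux_dvd_comp (hQP i) _
          rw [aux_comp_comp, mul_comm m (n i), ← aux_comp_comp, hprod,
            Polynomial.multiset_prod_comp] at h1
          exact dvd_trans (UniqueFactorizationMonoid.dvd_of_mem_normalizedFactors hT) h1
        obtain ⟨J, hJ, hTJ⟩ :=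
          (UniqueFactorizationMonoid.prime_of_normalized_factor T hT).exists_mem_multiset_dvd
            hTd
        obtain ⟨S, hS, rfl⟩ := Multiset.mem_map.mp hJ
        have hShered : HeredIrreducible (S.comp (X ^ n i)) :=
          aux_hered_comp (hl S hS) (hnpos i)
        have hassoc : Associated T (S.comp (X ^ n i)) :=
          (UniqueFactorizationMonoid.irreducible_of_normalized_factor T hT).associated_of_dvd
            (aux_hered_irred hShered) hTJ
        exact (aux_assoc_comp hassoc.symm (X ^ k)).irreducible (hShered k hkpos)
      have hcardA :
          Multiset.card (UniqueFactorizationMonoid.normalizedFactors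
            (((Q i).comp (X ^ m)).comp (X ^ k)))
          = Multiset.card (UniqueFactorizationMonoid.normalizedFactors
            ((Q i).comp (X ^ m))) :=
        aux_card_comp_eq hAm.ne_zero hfacts
      have hBdvd : (Q (i + 1)).comp (X ^ m) ∣ ((Q i).comp (X ^ m)).comp (X ^ k) := by
        have h1 := aux_dvd_comp (hstep' i).1 (X ^ m)
        rw [aux_comp_comp] at h1
        rw [aux_comp_comp, mul_comm k m]
        exact h1
      have hdeg : ((Q (i + 1)).comp (X ^ m)).natDegree <
          (((Q i).comp (X ^ m)).comp (X ^ k)).natDegree := by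
        rw [aux_natDegree_comp, aux_natDegree_comp, aux_natDegree_comp]
        calc (Q (i + 1)).natDegree * m < (k * (Q i).natDegree) * m :=
              mul_lt_mul_of_pos_right (hstep' i).2 hmpos
          _ = (Q i).natDegree * m * k := by ring
      have hfin := aux_card_lt_of_dvd (aux_monic_comp (hQm (i + 1)) hmpos).ne_zero
        (aux_monic_comp hAm hkpos).ne_zero hBdvd hdeg
      rwa [hcardA] at hfin
    have hdesc : ∀ i, Multiset.card (UniqueFactorizationMonoid.normalizedFactors
          ((Q i).comp (X ^ m))) + i ≤
        Multiset.card (UniqueFactorizationMonoid.normalizedFactors ((Q 0).comp (X ^ m))) := by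
      intro i
      induction i with
      | zero => simp
      | succ i ih =>
          have := key i
          omega
    have := hdesc (Multiset.card (UniqueFactorizationMonoid.normalizedFactors
      ((Q 0).comp (X ^ m))) + 1)
    omega
end

section
/- Let F be a field and let P ∈ F[X] be a monic irreducible polynomial with P ≠ X that has good heredity over F. Then for every positive integer M, the set of monic irreducible polynomials Q ∈ F[X] of degree at most M such that Q divides P(X^{n!}) for some positive integer n is finite. -/
open Polynomial

/-- If `P` has good heredity, only finitely many monic irreducible polynomials of bounded
degree divide some `P(X^{n!})`. -/
theorem stmt2 {F : Type*} [Field F] (P : F[X]) (hm : P.Monic) (hirr : Irreducible P)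
    (hX : P ≠ X) (hgh : HasGoodHeredity P) (M : ℕ) (hM : 0 < M) :
    {Q : F[X] | Q.Monic ∧ Irreducible Q ∧ Q.natDegree ≤ M ∧
      ∃ n : ℕ, 0 < n ∧ Q ∣ P.comp (X ^ (Nat.factorial n))}.Finite := by
  classical
  obtain ⟨N, hN, l, hl, heq⟩ := hgh
  set B : ℕ := N * (M + 1) with hB
  apply Set.Finite.subset
    (Set.Finite.biUnion (Set.finite_Iio B) (fun n _ =>
      (UniqueFactorizationMonoid.normalizedFactors
        (P.comp (X ^ (Nat.factorial n)))).toFinset.finite_toSet))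
  rintro Q ⟨hQm, hQirr, hQdeg, n, hn, hdvd⟩
  have hcompne : ∀ k : ℕ, P.comp (X ^ (Nat.factorial k)) ≠ 0 := by
    intro k
    have : (P.comp (X ^ (Nat.factorial k))).Monic :=
      hm.comp (monic_X_pow _) (by
        simp [natDegree_X_pow, (Nat.factorial_pos k).ne'])
    exact this.ne_zero
  by_cases hnB : n < B
  · refine Set.mem_biUnion hnB ?_
    obtain ⟨q, hqmem, hassoc⟩ :=
      UniqueFactorizationMonoid.exists_mem_normalizedFactors_of_dvd (hcompne n) hQirr hdvd
    have hnorm : normalize q = q :=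
      UniqueFactorizationMonoid.normalize_normalized_factor q hqmem
    have : Q = q := hassoc.eq_of_normalized hQm.normalize_eq_self hnorm
    rw [this]; exact Finset.mem_coe.mpr (Multiset.mem_toFinset.mpr hqmem)
  · exfalso
    push_neg at hnB
    have hNn : N ≤ n := le_trans (Nat.le_mul_of_pos_right N (Nat.succ_pos M)) hnB
    have hNdvd : N ∣ Nat.factorial n := Nat.dvd_factorial hN hNn
    obtain ⟨m, hmN⟩ := hNdvd
    have hmpos : M < m := by
      by_contra hcon
      push_neg at hcon
      have h1 : Nat.factorial n ≤ N * M := by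
        rw [hmN]; exact Nat.mul_le_mul_left N hcon
      have h2 : n ≤ Nat.factorial n := Nat.self_le_factorial n
      have h3 : N * (M + 1) = N * M + N := by ring
      omega
    have hm0 : 0 < m := lt_of_le_of_lt (Nat.zero_le M) hmpos
    have hfact : P.comp (X ^ (Nat.factorial n))
        = (l.map fun q => q.comp (X ^ m)).prod := by
      have : (X : F[X]) ^ (Nat.factorial n) = (X ^ N).comp (X ^ m) := by
        rw [X_pow_comp, ← pow_mul, hmN, Nat.mul_comm]
      rw [this, ← comp_assoc, heq, multiset_prod_comp]
    obtain ⟨a, hamem, hQa⟩ := hQirr.prime.exists_mem_multiset_dvd (hfact ▸ hdvd)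
    obtain ⟨q, hql, rfl⟩ := Multiset.mem_map.mp hamem
    have hairr : Irreducible (q.comp (X ^ m)) := hl q hql m hm0
    have hq1 : 1 ≤ q.natDegree := by
      have : Irreducible (q.comp (X ^ 1)) := hl q hql 1 one_pos
      have h := this.natDegree_pos
      rw [natDegree_comp, natDegree_X_pow] at h
      omega
    have hdeg : (q.comp (X ^ m)).natDegree ≤ Q.natDegree :=
      natDegree_le_of_dvd (hQirr.associated_of_dvd hairr hQa).symm.dvd hQirr.ne_zero
    rw [natDegree_comp, natDegree_X_pow] at hdeg
    have : m ≤ Q.natDegree := le_trans (Nat.le_mul_of_pos_left m hq1) hdeg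
    omega
end

section
/- Let F be a field and a ∈ F. (i) If a is very rootless modtor in F, then the polynomial X − a is hereditarily irreducible over F, i.e., X^n − a is irreducible over F for every positive integer n. (ii) If X − a is hereditarily irreducible over F, then a is very rootless in F. -/
open Polynomial

section AuxIrr
open IntermediateField

lemma rou_map {F E : Type*} [Monoid F] [Monoid E] (f : E →* F) {a : E}
    (h : IsRootOfUnityElem a) : IsRootOfUnityElem (f a) := by
  obtain ⟨k, hk, h1⟩ := h
  exact ⟨k, hk, by rw [← map_pow, h1, map_one]⟩

lemma rou_mul {F : Type*} [CommMonoid F] {a b : F} (ha : IsRootOfUnityElem a)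
    (hb : IsRootOfUnityElem b) : IsRootOfUnityElem (a * b) := by
  obtain ⟨k, hk, h1⟩ := ha
  obtain ⟨l, hl, h2⟩ := hb
  refine ⟨k * l, Nat.mul_pos hk hl, ?_⟩
  rw [mul_pow, pow_mul, h1, one_pow, one_mul, mul_comm k l, pow_mul, h2, one_pow]

lemma rou_neg_one {F : Type*} [Field F] : IsRootOfUnityElem (-1 : F) :=
  ⟨2, by norm_num⟩

universe u

theorem aux_irr {n : ℕ} : ∀ {K : Type u} [Field K] (a : K), n ≠ 0 →
    (∀ q : ℕ, q.Prime → q ∣ n → ∀ ζ b : K, IsRootOfUnityElem ζ → b ^ q ≠ ζ * a) →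
    Irreducible (X ^ n - C a) := by
  induction n using induction_on_primes with
  | zero => intro K _ a h _; exact absurd rfl h
  | one => intro K _ a _ _; simpa using irreducible_X_sub_C a
  | prime_mul p m hp IH =>
    intro K _ a hpm ha
    have hm : m ≠ 0 := by rintro rfl; simp at hpm
    rw [mul_comm]
    apply X_pow_mul_sub_C_irreducible
      (X_pow_sub_C_irreducible_of_prime hp (fun b hb => ha p hp ⟨m, rfl⟩ 1 b ⟨1, one_pos, one_pow 1⟩ (by rw [hb, one_mul])))
    intro E _ _ x hx
    have hint : IsIntegral K x := not_not.mp fun h ↦ by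
      simpa only [degree_zero, degree_X_pow_sub_C hp.pos,
        WithBot.natCast_ne_bot] using congr_arg degree (hx.symm.trans (dif_neg h))
    apply IH _ hm
    intro q hq hqm ζ b hζ hb
    have hgen : Algebra.norm K (AdjoinSimple.gen K x) = (-1) ^ (p+1) * a := by
      rw [← adjoin.powerBasis_gen hint, Algebra.PowerBasis.norm_gen_eq_coeff_zero_minpoly]
      rw [adjoin.powerBasis_gen, minpoly_gen, hx, adjoin.powerBasis_dim, hx]
      rw [natDegree_X_pow_sub_C]
      have h0 : (X ^ p - C a).coeff 0 = -a := by
        simp [coeff_X_pow, hp.ne_zero, Ne.symm hp.ne_zero]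
      rw [h0, pow_succ]
      ring
    apply ha q hq (dvd_mul_of_dvd_right hqm p) ((-1) ^ (p+1) * Algebra.norm K ζ) (Algebra.norm K b)
      (rou_mul (by
        rcases Nat.even_or_odd (p+1) with h | h
        · rw [h.neg_one_pow]; exact ⟨1, one_pos, one_pow 1⟩
        · rw [h.neg_one_pow]; exact rou_neg_one) (rou_map (Algebra.norm K) hζ))
    rw [← map_pow, hb, map_mul, hgen]
    ring


end AuxIrr

/-- Very rootless modtor implies `X - a` hereditarily irreducible, which in turn implies
very rootless. -/
theorem stmt4 {F : Type*} [Field F] (a : F) :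
    (VeryRootlessModtor a → HeredIrreducible (X - C a)) ∧
    (HeredIrreducible (X - C a) → VeryRootless a) := by
  have hcomp : ∀ n : ℕ, (X - C a).comp (X ^ n) = X ^ n - C a := by
    intro n; simp [sub_comp]
  constructor
  · intro h n hn
    rw [hcomp]
    apply aux_irr a hn.ne'
    intro q hq hqn ζ b hζ hb
    have hζ0 : ζ ≠ 0 := by
      rintro rfl
      obtain ⟨k, hk, h1⟩ := hζ
      simp [zero_pow hk.ne'] at h1
    apply h
    refine ⟨ζ⁻¹, b, q, ?_, hq.two_le, ?_⟩
    · obtain ⟨k, hk, h1⟩ := hζ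
      exact ⟨k, hk, by rw [inv_pow, h1, inv_one]⟩
    · rw [hb, inv_mul_cancel_left₀ hζ0]
  · intro h ⟨g, n, hn, ha⟩
    have := h n (by omega)
    rw [hcomp] at this
    exact pow_ne_of_irreducible_X_pow_sub_C this dvd_rfl (by omega) g ha.symm
end

section
/- Let F be a field and let a ∈ F be an element that is neither zero nor a root of unity. (i) If a is rootless modtor in F, then the polynomial X − a has good heredity over F. (ii) If X − a has good heredity over F, then a is rootless in F. -/
open Polynomial

section StmtAux

open Polynomial UniqueFactorizationMonoid

variable {F : Type*} [Field F]

private lemma aux_sum_ge_card (s : Multiset ℕ) (h : ∀ x ∈ s, 1 ≤ x) :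
    Multiset.card s ≤ s.sum := by
  induction s using Multiset.induction_on with
  | empty => simp
  | cons a t ih =>
    rw [Multiset.card_cons, Multiset.sum_cons]
    have h1 : 1 ≤ a := h a (Multiset.mem_cons_self a t)
    have h2 := ih fun x hx => h x (Multiset.mem_cons_of_mem hx)
    omega

private lemma aux_sum_eq_card (s : Multiset ℕ) (h : ∀ x ∈ s, 1 ≤ x)
    (h2 : s.sum = Multiset.card s) : ∀ x ∈ s, x = 1 := by
  induction s using Multiset.induction_on with
  | empty => simp
  | cons a t ih =>
    rw [Multiset.sum_cons, Multiset.card_cons] at h2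
    have h1 : 1 ≤ a := h a (Multiset.mem_cons_self a t)
    have h3 := aux_sum_ge_card t fun x hx => h x (Multiset.mem_cons_of_mem hx)
    have ha : a = 1 := by omega
    have ht : t.sum = Multiset.card t := by omega
    intro x hx
    rcases Multiset.mem_cons.mp hx with rfl | hx
    · exact ha
    · exact ih (fun y hy => h y (Multiset.mem_cons_of_mem hy)) ht x hx

private lemma aux_sum_map_le {α : Type*} (s : Multiset α) (f g : α → ℕ)
    (h : ∀ x ∈ s, f x ≤ g x) : (s.map f).sum ≤ (s.map g).sum := by
  induction s using Multiset.induction_on with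
  | empty => simp
  | cons a t ih =>
    simp only [Multiset.map_cons, Multiset.sum_cons]
    have h1 := h a (Multiset.mem_cons_self a t)
    have h2 := ih fun x hx => h x (Multiset.mem_cons_of_mem hx)
    omega

private lemma aux_card_sum {α : Type*} (s : Multiset (Multiset α)) :
    Multiset.card s.sum = (s.map Multiset.card).sum := by
  induction s using Multiset.induction_on with
  | empty => simp
  | cons a t ih => simp [ih]

private lemma aux_comp_pow (a : F) (n m : ℕ) :
    (X ^ n - C a : F[X]).comp (X ^ m) = X ^ (n * m) - C a := by
  rw [sub_comp, C_comp, pow_comp, X_comp, ← pow_mul, mul_comm]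

private lemma aux_key_eval (a : F) {n : ℕ} {Q : F[X]} (hQ : Q.Monic)
    (hdvd : Q ∣ X ^ n - C a) :
    (Q.eval 0 ^ 2) ^ n = a ^ (2 * Q.natDegree) := by
  set K := AlgebraicClosure F
  set f : F →+* K := algebraMap F K with hf
  have hinj : Function.Injective f := f.injective
  set t : Multiset K := (Q.map f).roots with ht
  have hsplit : Q.map f = (t.map fun ρ => X - C ρ).prod :=
    (IsAlgClosed.splits (Q.map f)).eq_prod_roots_of_monic (hQ.map f)
  have hcard : Multiset.card t = Q.natDegree := by
    rw [ht, ← hQ.natDegree_map f]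
    exact splits_iff_card_roots.mp (IsAlgClosed.splits _)
  have hroot : ∀ ρ ∈ t, ρ ^ n = f a := by
    intro ρ hρ
    have h1 : (Q.map f).IsRoot ρ := isRoot_of_mem_roots hρ
    obtain ⟨R, hR⟩ := hdvd
    have h2 : ((X ^ n - C a : F[X]).map f).eval ρ = 0 := by
      rw [hR, Polynomial.map_mul, eval_mul, h1.eq_zero, zero_mul]
    simpa [sub_eq_zero] using h2
  have heval : f (Q.eval 0) = (t.map fun ρ => -ρ).prod := by
    calc f (Q.eval 0) = (Q.map f).eval 0 := by
          rw [eval_map, eval₂_at_zero, coeff_zero_eq_eval_zero]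
    _ = (t.map fun ρ => -ρ).prod := by
        rw [hsplit, eval_multiset_prod, Multiset.map_map]
        congr 1
        refine Multiset.map_congr rfl fun ρ _ => ?_
        simp
  apply hinj
  simp only [map_pow]
  rw [heval, ← Multiset.prod_map_pow, ← Multiset.prod_map_pow]
  have h5 : (t.map fun ρ => ((-ρ) ^ 2) ^ n).prod = (t.map fun _ => (f a) ^ 2).prod := by
    refine congrArg _ (Multiset.map_congr rfl fun ρ hρ => ?_)
    rw [show ((-ρ)^2 : K) = ρ^2 by ring, ← pow_mul, mul_comm 2 n, pow_mul, hroot ρ hρ]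
  rw [h5, Multiset.map_const', Multiset.prod_replicate, hcard, ← pow_mul, mul_comm 2 _, pow_mul]

private lemma aux_exp_descend {a c : F} (ha : a ≠ 0) (hc : c ≠ 0)
    {k n : ℕ} (hn : 0 < n) (h : c ^ n = a ^ k) :
    ∃ t : ℕ, 0 < t ∧ n = Nat.gcd k n * t ∧
      ∃ ζ g : F, IsRootOfUnityElem ζ ∧ g ^ t = ζ * a := by
  set A : Fˣ := Units.mk0 a ha with hA
  set Cu : Fˣ := Units.mk0 c hc with hCu
  have hu : Cu ^ n = A ^ k := by
    ext; simp [hA, hCu, h]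
  have huz : Cu ^ (n : ℤ) = A ^ (k : ℤ) := by
    rw [zpow_natCast, zpow_natCast, hu]
  set g := Nat.gcd k n with hg
  have hg0 : 0 < g := Nat.gcd_pos_of_pos_right _ hn
  have hgdvd : g ∣ n := Nat.gcd_dvd_right k n
  obtain ⟨t, hnt⟩ := hgdvd
  have ht0 : 0 < t := by
    rcases Nat.eq_zero_or_pos t with rfl | h0
    · rw [mul_zero] at hnt; omega
    · exact h0
  set u := Nat.gcdA k n with hu'
  set v := Nat.gcdB k n with hv'
  have hbez : (g : ℤ) = k * u + n * v := Nat.gcd_eq_gcd_ab k n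
  set H : Fˣ := Cu ^ u * A ^ v with hH
  have hAg : A ^ (g : ℤ) = H ^ (n : ℤ) := by
    rw [hbez, zpow_add, zpow_mul, zpow_mul, ← huz, hH, mul_zpow,
      ← zpow_mul, ← zpow_mul, ← zpow_mul, ← zpow_mul,
      mul_comm (n : ℤ) u, mul_comm (n : ℤ) v]
  have hnz : (n : ℤ) = (t : ℤ) * (g : ℤ) := by
    have h2 : n = t * g := by rw [hnt, Nat.mul_comm]
    exact_mod_cast h2
  have hAg' : A ^ g = (H ^ t) ^ g := by
    have h3 := hAg
    rw [hnz, zpow_mul] at h3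
    rw [← zpow_natCast A g, h3]
    norm_cast
  set ζ : Fˣ := A * (H ^ t)⁻¹ with hζ
  have hζg : ζ ^ g = 1 := by
    rw [hζ, mul_pow, hAg', inv_pow, mul_inv_cancel]
  refine ⟨t, ht0, hnt, ((ζ⁻¹ : Fˣ) : F), ((H : F)), ⟨g, hg0, ?_⟩, ?_⟩
  · rw [← Units.val_pow_eq_pow_val, inv_pow, hζg, inv_one, Units.val_one]
  · have h3 : (ζ⁻¹ : Fˣ) * A = H ^ t := by rw [hζ]; group
    have h4 : (H : F) ^ t = ((H ^ t : Fˣ) : F) := by rw [Units.val_pow_eq_pow_val]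
    rw [h4, ← h3, Units.val_mul]
    rfl

private lemma aux_deg_bound {a : F} (ha : a ≠ 0) {B : ℕ}
    (hB : ∀ t : ℕ, 0 < t → (∃ ζ g : F, IsRootOfUnityElem ζ ∧ g ^ t = ζ * a) → t ≤ B)
    {n : ℕ} (hn : 0 < n) {Q : F[X]} (hQm : Q.Monic) (hd : 0 < Q.natDegree)
    (hdvd : Q ∣ X ^ n - C a) : n ≤ 2 * B * Q.natDegree := by
  have hc : Q.eval 0 ≠ 0 := by
    intro h0
    obtain ⟨R, hR⟩ := hdvd
    have h1 := congrArg (eval 0) hR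
    simp only [eval_sub, eval_pow, eval_X, eval_C, eval_mul, h0, zero_mul,
      zero_pow hn.ne'] at h1
    rw [zero_sub, neg_eq_zero] at h1
    exact ha h1
  have hkey := aux_key_eval a hQm hdvd
  have hc2 : Q.eval 0 ^ 2 ≠ 0 := pow_ne_zero _ hc
  obtain ⟨t, ht0, hnt, hmem⟩ := aux_exp_descend ha hc2 hn hkey
  have htB : t ≤ B := hB t ht0 hmem
  have hgcd : Nat.gcd (2 * Q.natDegree) n ≤ 2 * Q.natDegree :=
    Nat.gcd_le_left _ (by omega)
  calc n = Nat.gcd (2 * Q.natDegree) n * t := hnt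
  _ ≤ (2 * Q.natDegree) * B := Nat.mul_le_mul hgcd htB
  _ = 2 * B * Q.natDegree := by ring

variable [DecidableEq F]

private lemma aux_monic_of_mem_nf {p q : F[X]} (hq : q ∈ normalizedFactors p) : q.Monic := by
  have h1 := normalize_normalized_factor q hq
  have h2 : q ≠ 0 := (prime_of_normalized_factor q hq).ne_zero
  have h3 := Polynomial.monic_normalize (p := q) h2
  rwa [h1] at h3

private lemma aux_nf_prod {p : F[X]} (hp : p.Monic) : (normalizedFactors p).prod = p := by
  have hp0 : p ≠ 0 := hp.ne_zero
  refine Polynomial.eq_of_monic_of_associated ?_ hp (prod_normalizedFactors hp0)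
  have h1 : (((normalizedFactors p).map id).prod).Monic :=
    monic_multiset_prod_of_monic _ id fun q hq => aux_monic_of_mem_nf hq
  rwa [Multiset.map_id] at h1

private lemma aux_card_bound {a : F} (ha : a ≠ 0) {B : ℕ}
    (hB : ∀ t : ℕ, 0 < t → (∃ ζ g : F, IsRootOfUnityElem ζ ∧ g ^ t = ζ * a) → t ≤ B)
    {n : ℕ} (hn : 0 < n) :
    Multiset.card (normalizedFactors (X ^ n - C a : F[X])) ≤ 2 * B := by
  set p : F[X] := X ^ n - C a with hpdef
  have hpm : p.Monic := monic_X_pow_sub_C a hn.ne'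
  set l := normalizedFactors p with hl
  have hmono : ∀ Q ∈ l, Q.Monic := fun Q hq => aux_monic_of_mem_nf hq
  have hdeg : (l.map natDegree).sum = n := by
    have h1 : l.prod = p := aux_nf_prod hpm
    have h2 := natDegree_multiset_prod_of_monic l hmono
    rw [h1, hpdef, natDegree_X_pow_sub_C] at h2
    omega
  have hQb : ∀ Q ∈ l, n ≤ 2 * B * Q.natDegree := by
    intro Q hq
    have hirr : Irreducible Q := irreducible_of_normalized_factor Q hq
    exact aux_deg_bound ha hB hn (hmono Q hq) hirr.natDegree_pos
      (dvd_of_mem_normalizedFactors hq)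
  have hle : Multiset.card l * n ≤ 2 * B * n := by
    calc Multiset.card l * n = (l.map fun _ => n).sum := by
          rw [Multiset.map_const', Multiset.sum_replicate, smul_eq_mul]
    _ ≤ (l.map fun Q => 2 * B * Q.natDegree).sum := aux_sum_map_le _ _ _ hQb
    _ = 2 * B * (l.map natDegree).sum := by
          rw [← Multiset.sum_map_mul_left]
    _ = 2 * B * n := by rw [hdeg]
  exact Nat.le_of_mul_le_mul_right hle hn

private lemma aux_comp_ne_zero {Q : F[X]} (hQ : 0 < Q.natDegree) (m : ℕ) (hm : 0 < m) :
    Q.comp (X ^ m) ≠ 0 ∧ 0 < (Q.comp (X ^ m)).natDegree := by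
  have hdeg : (Q.comp (X ^ m)).natDegree = Q.natDegree * m := by
    rw [natDegree_comp, natDegree_X_pow]
  constructor
  · intro h0
    rw [h0, natDegree_zero] at hdeg
    nlinarith
  · rw [hdeg]; positivity

private lemma aux_nf_comp_eq {a : F} (n m : ℕ) (hn : 0 < n) (hm : 0 < m) :
    normalizedFactors (X ^ (n * m) - C a : F[X]) =
      ((normalizedFactors (X ^ n - C a : F[X])).map
        fun Q => normalizedFactors (Q.comp (X ^ m))).sum := by
  set l := normalizedFactors (X ^ n - C a : F[X]) with hl
  have h1 : (X ^ (n * m) - C a : F[X]) = (l.map fun Q => Q.comp (X ^ m)).prod := by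
    rw [← aux_comp_pow, ← aux_nf_prod (monic_X_pow_sub_C a hn.ne'), multiset_prod_comp]
  have h0 : (0 : F[X]) ∉ l.map fun Q => Q.comp (X ^ m) := by
    intro hmem
    obtain ⟨Q, hQ, hQ0⟩ := Multiset.mem_map.mp hmem
    exact (aux_comp_ne_zero (irreducible_of_normalized_factor Q hQ).natDegree_pos m hm).1 hQ0
  rw [h1, normalizedFactors_multiset_prod _ h0, Multiset.map_map]
  rfl

end StmtAux

section StmtAux2
open Polynomial UniqueFactorizationMonoid
variable {F : Type*} [Field F] [DecidableEq F]

private lemma aux_nf_card_pos {q : F[X]} (hq0 : q ≠ 0) (hqd : 0 < q.natDegree) :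
    1 ≤ Multiset.card (normalizedFactors q) := by
  by_contra h
  push_neg at h
  have h0 : normalizedFactors q = 0 := Multiset.card_eq_zero.mp (by omega)
  have h1 := prod_normalizedFactors hq0
  rw [h0, Multiset.prod_zero] at h1
  have hu : IsUnit q := associated_one_iff_isUnit.mp h1.symm
  have h2 := natDegree_eq_zero_of_isUnit hu
  omega

end StmtAux2

open UniqueFactorizationMonoid in
/-- Rootless modtor implies `X - a` has good heredity, which in turn implies rootless. -/
theorem stmt5 {F : Type*} [Field F] (a : F) (ha : a ≠ 0) (hru : ¬ IsRootOfUnityElem a) :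
    (RootlessModtorElem a → HasGoodHeredity (X - C a)) ∧
    (HasGoodHeredity (X - C a) → RootlessElem a) := by
  classical
  constructor
  · -- rootless modtor → good heredity
    intro hrm
    obtain ⟨B, hBmem⟩ := (hrm.bddAbove : BddAbove _)
    have hB : ∀ t : ℕ, 0 < t → (∃ ζ g : F, IsRootOfUnityElem ζ ∧ g ^ t = ζ * a) → t ≤ B :=
      fun t ht hex => hBmem ⟨ht, hex⟩
    set f : ℕ → ℕ :=
      fun k => Multiset.card (normalizedFactors (X ^ k - C a : F[X])) with hfdef
    have hfb : ∀ k, 0 < k → f k ≤ 2 * B := by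
      intro k hk
      rw [hfdef]
      exact aux_card_bound ha hB hk
    have hcard_ge1 : ∀ (k m : ℕ), 0 < m →
        ∀ x ∈ (normalizedFactors (X ^ k - C a : F[X])).map
          (fun Q => Multiset.card (normalizedFactors (Q.comp (X ^ m)))), 1 ≤ x := by
      intro k m hm x hx
      obtain ⟨Q, hQ, rfl⟩ := Multiset.mem_map.mp hx
      have hd := (irreducible_of_normalized_factor Q hQ).natDegree_pos
      obtain ⟨hne, hdp⟩ := aux_comp_ne_zero hd m hm
      exact aux_nf_card_pos hne hdp
    have hexpand : ∀ (k m : ℕ), 0 < k → 0 < m → f (k * m) =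
        ((normalizedFactors (X ^ k - C a : F[X])).map
          (fun Q => Multiset.card (normalizedFactors (Q.comp (X ^ m))))).sum := by
      intro k m hk hm
      rw [hfdef]
      simp only
      rw [aux_nf_comp_eq (a := a) k m hk hm, aux_card_sum, Multiset.map_map]
      rfl
    have hfmono : ∀ k m, 0 < k → 0 < m → f k ≤ f (k * m) := by
      intro k m hk hm
      rw [hexpand k m hk hm]
      have h1 := aux_sum_ge_card _ (hcard_ge1 k m hm)
      rwa [Multiset.card_map] at h1
    -- find the maximizer
    set P : ℕ → Prop := fun v => ∃ k, 0 < k ∧ f k = v with hPdef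
    have hP1 : P (f 1) := ⟨1, one_pos, rfl⟩
    have hMex : P (Nat.findGreatest P (2 * B)) :=
      Nat.findGreatest_spec (hfb 1 one_pos) hP1
    obtain ⟨n₀, hn₀, hfn₀⟩ := hMex
    have hmax : ∀ k, 0 < k → f k ≤ f n₀ := by
      intro k hk
      rw [hfn₀]
      exact Nat.le_findGreatest (hfb k hk) ⟨k, hk, rfl⟩
    refine ⟨n₀, hn₀, normalizedFactors (X ^ n₀ - C a : F[X]), ?_, ?_⟩
    · intro Q hQ m hm
      have hcount : f (n₀ * m) = f n₀ :=
        le_antisymm (hmax _ (mul_pos hn₀ hm)) (hfmono _ _ hn₀ hm)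
      have hsum : ((normalizedFactors (X ^ n₀ - C a : F[X])).map
          (fun Q => Multiset.card (normalizedFactors (Q.comp (X ^ m))))).sum =
          Multiset.card ((normalizedFactors (X ^ n₀ - C a : F[X])).map
          (fun Q => Multiset.card (normalizedFactors (Q.comp (X ^ m))))) := by
        rw [Multiset.card_map, ← hexpand n₀ m hn₀ hm, hcount, hfdef]
      have hall := aux_sum_eq_card _ (hcard_ge1 n₀ m hm) hsum
      have h1 : Multiset.card (normalizedFactors (Q.comp (X ^ m))) = 1 :=
        hall _ (Multiset.mem_map_of_mem _ hQ)
      obtain ⟨r, hr⟩ := Multiset.card_eq_one.mp h1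
      have hd := (irreducible_of_normalized_factor Q hQ).natDegree_pos
      obtain ⟨hne, hdp⟩ := aux_comp_ne_zero hd m hm
      have hassoc : Associated r (Q.comp (X ^ m)) := by
        have h2 := prod_normalizedFactors hne
        rwa [hr, Multiset.prod_singleton] at h2
      exact hassoc.irreducible
        (irreducible_of_normalized_factor r (by rw [hr]; exact Multiset.mem_singleton_self r))
    · rw [sub_comp, X_comp, C_comp]
      exact (aux_nf_prod (monic_X_pow_sub_C a hn₀.ne')).symm
  · -- good heredity → rootless
    rintro ⟨n, hn, l, hl, hprod⟩
    have hprod' : (X ^ n - C a : F[X]) = l.prod := by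
      rw [← hprod, sub_comp, X_comp, C_comp]
    apply Set.Finite.subset (Set.finite_Iic n)
    rintro m ⟨hm, b, hb⟩
    simp only [Set.mem_Iic]
    by_contra hmn
    push_neg at hmn
    have hdvd : (X ^ n - C b : F[X]) ∣ X ^ (n * m) - C a := by
      have h1 := sub_dvd_pow_sub_pow (X ^ n : F[X]) (C b) m
      rwa [← pow_mul, ← C_pow, hb] at h1
    have h1 : (X ^ (n * m) - C a : F[X]) = (l.map (fun Q => Q.comp (X ^ m))).prod := by
      rw [← aux_comp_pow, hprod', multiset_prod_comp]
    have hnz : (X ^ n - C b : F[X]) ≠ 0 := (monic_X_pow_sub_C b hn.ne').ne_zero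
    have hnu : ¬ IsUnit (X ^ n - C b : F[X]) := by
      intro hu
      have h2 := Polynomial.isUnit_iff_degree_eq_zero.mp hu
      rw [degree_X_pow_sub_C hn b] at h2
      exact_mod_cast hn.ne' (by exact_mod_cast h2)
    obtain ⟨r, hr, hrdvd⟩ := WfDvdMonoid.exists_irreducible_factor hnu hnz
    have hrdvd2 : r ∣ (l.map (fun Q => Q.comp (X ^ m))).prod := by
      rw [← h1]
      exact hrdvd.trans hdvd
    obtain ⟨q, hq, hrq⟩ := hr.prime.exists_mem_multiset_dvd hrdvd2
    obtain ⟨Q, hQ, rfl⟩ := Multiset.mem_map.mp hq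
    have hQirr : Irreducible (Q.comp (X ^ m)) := hl Q hQ m hm
    have hassoc : Associated r (Q.comp (X ^ m)) := hr.associated_of_dvd hQirr hrq
    have hQd : 0 < Q.natDegree := by
      have h3 := hl Q hQ 1 one_pos
      rw [pow_one, comp_X] at h3
      exact h3.natDegree_pos
    have hr1 : r.natDegree ≤ n := by
      have h4 := natDegree_le_of_dvd hrdvd hnz
      rwa [natDegree_X_pow_sub_C] at h4
    have hr2 : r.natDegree = Q.natDegree * m := by
      have h5 : r.natDegree = (Q.comp (X ^ m)).natDegree := by
        refine le_antisymm (natDegree_le_of_dvd hassoc.dvd hQirr.ne_zero)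
          (natDegree_le_of_dvd hassoc.symm.dvd hr.ne_zero)
      rw [h5, natDegree_comp, natDegree_X_pow]
    nlinarith
end

section
/- Let F be a field containing only finitely many roots of unity (the torsion subgroup μ(F) of F^× is finite). Then the following are equivalent: (i) F is rootless; (ii) F is rootless modtor; (iii) for every a ∈ F that is neither zero nor a root of unity, the polynomial X − a has good heredity over F. -/
open Polynomial

universe u

namespace Stmt9Aux

open IntermediateField


variable {F : Type*} [Field F]

theorem rootless_of_modtor (h : RootlessModtorField F) : RootlessField F := by
  intro a ha hator
  apply (h a ha hator).subset
  rintro n ⟨hn, x, hx⟩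
  exact ⟨hn, 1, x, ⟨1, one_pos, one_pow 1⟩, by simpa using hx⟩

/-- a common exponent killing all roots of unity, from finiteness -/
theorem exists_exponent (h : {a : F | IsRootOfUnityElem a}.Finite) :
    ∃ m : ℕ, 0 < m ∧ ∀ ζ : F, IsRootOfUnityElem ζ → ζ ^ m = 1 := by
  classical
  set s := h.toFinset with hs
  refine ⟨∏ ζ ∈ s, (if hζ : IsRootOfUnityElem ζ then hζ.choose else 1), ?_, ?_⟩
  · apply Finset.prod_pos
    intro ζ hζ
    split
    · next hζ' => exact hζ'.choose_spec.1
    · exact one_pos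
  · intro ζ hζ
    have hζs : ζ ∈ s := by simpa [hs] using hζ
    have := Finset.dvd_prod_of_mem
      (fun ζ : F => if hζ : IsRootOfUnityElem ζ then hζ.choose else 1) hζs
    obtain ⟨c, hc⟩ := this
    rw [hc, dif_pos hζ, pow_mul, hζ.choose_spec.2, one_pow]

theorem modtor_of_rootless (h : {a : F | IsRootOfUnityElem a}.Finite)
    (hr : RootlessField F) : RootlessModtorField F := by
  obtain ⟨m, hm, hmall⟩ := exists_exponent h
  intro a ha hator
  have ham : (a ^ m) ≠ 0 := pow_ne_zero _ ha
  have hamtor : ¬ IsRootOfUnityElem (a ^ m) := by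
    rintro ⟨k, hk, hak⟩
    exact hator ⟨m * k, Nat.mul_pos hm hk, by rwa [pow_mul]⟩
  have hfin := hr _ ham hamtor
  have : {n : ℕ | 0 < n ∧ ∃ ζ g : F, IsRootOfUnityElem ζ ∧ g ^ n = ζ * a} ⊆
      (fun n => n * m) ⁻¹' {n : ℕ | 0 < n ∧ ∃ x : F, x ^ n = a ^ m} := by
    rintro n ⟨hn, ζ, g, hζ, hg⟩
    refine ⟨Nat.mul_pos hn hm, g, ?_⟩
    show g ^ (n * m) = a ^ m
    rw [pow_mul, hg, mul_pow, hmall ζ hζ, one_mul]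
  exact (hfin.preimage (fun x _ y _ hxy => Nat.eq_of_mul_eq_mul_right hm hxy)).subset this

theorem hered_irreducible_self {Q : F[X]} (h : HeredIrreducible Q) : Irreducible Q := by
  simpa using h 1 one_pos

theorem rootless_of_good_heredity
    (h : ∀ a : F, a ≠ 0 → ¬ IsRootOfUnityElem a → HasGoodHeredity (X - C a)) :
    RootlessField F := by
  intro a ha hator
  by_contra hinf
  obtain ⟨n, hn, l, hl, hprod⟩ := h a ha hator
  rw [sub_comp, X_comp, C_comp] at hprod
  -- find k ∈ S with k > n
  have : ∃ k, (0 < k ∧ ∃ x : F, x ^ k = a) ∧ n < k := by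
    by_contra hk
    push_neg at hk
    exact hinf <| (Set.finite_Icc 1 n).subset fun k hkmem =>
      ⟨hkmem.1, hk k hkmem⟩
  obtain ⟨k, ⟨hk, x, hx⟩, hnk⟩ := this
  -- X^{nk} - C a has the factor X^n - C x
  have hdvd1 : (X ^ n - C x : F[X]) ∣ X ^ (n * k) - C a := by
    have h0 := sub_dvd_pow_sub_pow (X ^ n : F[X]) (C x) k
    have e1 : ((X : F[X]) ^ n) ^ k = X ^ (n * k) := by rw [pow_mul]
    have e2 : (C x : F[X]) ^ k = C a := by rw [← map_pow, hx]
    rwa [e1, e2] at h0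
  -- and equals the product of the Q.comp (X^k)
  have hcomp : (X ^ (n * k) - C a : F[X]) = (l.map (fun Q => Q.comp (X ^ k))).prod := by
    have : ((X : F[X]) ^ n - C a).comp (X ^ k) = X ^ (n * k) - C a := by
      rw [sub_comp, pow_comp, X_comp, C_comp, ← pow_mul, mul_comm k n]
    rw [← this, hprod, multiset_prod_comp]
  -- take an irreducible factor R of X^n - C x
  have hXnx : ¬ IsUnit (X ^ n - C x : F[X]) := by
    intro hu
    have := natDegree_eq_zero_of_isUnit hu
    rw [natDegree_X_pow_sub_C] at this
    omega
  obtain ⟨R, hR, hRdvd⟩ := WfDvdMonoid.exists_irreducible_factor hXnx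
    (X_pow_sub_C_ne_zero hn x)
  have hRdeg : R.natDegree ≤ n := by
    refine (natDegree_le_of_dvd hRdvd (X_pow_sub_C_ne_zero hn x)).trans ?_
    rw [natDegree_X_pow_sub_C]
  have hRdvd2 : R ∣ (l.map (fun Q => Q.comp (X ^ k))).prod := by
    rw [← hcomp]; exact hRdvd.trans hdvd1
  obtain ⟨Q', hQ'mem, hQ'dvd⟩ :=
    (UniqueFactorizationMonoid.irreducible_iff_prime.mp hR).exists_mem_multiset_dvd hRdvd2
  obtain ⟨Q, hQmem, rfl⟩ := Multiset.mem_map.mp hQ'mem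
  have hQirr : Irreducible (Q.comp (X ^ k)) := hl Q hQmem k hk
  -- degrees give contradiction
  obtain ⟨u, hu⟩ := hQ'dvd
  rcases hQirr.isUnit_or_isUnit hu with h1 | h1
  · exact hR.not_isUnit h1
  · have hR0 : R ≠ 0 := hR.ne_zero
    have hu0 : u ≠ 0 := by rintro rfl; simp at hu; exact hQirr.ne_zero hu
    have hdeg : (Q.comp (X ^ k)).natDegree = R.natDegree := by
      rw [hu, natDegree_mul hR0 hu0, natDegree_eq_zero_of_isUnit h1, add_zero]
    have hQdeg : 1 ≤ Q.natDegree :=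
      (hered_irreducible_self (hl _ hQmem)).natDegree_pos
    rw [natDegree_comp, natDegree_X_pow] at hdeg
    nlinarith [hRdeg, hnk, hQdeg, hdeg]



/-- coordinates in a quadratic extension -/
lemma coords_quad {K E : Type u} [Field K] [Field E] [Algebra K E] {x : E}
    (hxK : x ∉ Set.range (algebraMap K E)) {α β : K}
    (h : algebraMap K E α + algebraMap K E β * x = 0) : α = 0 ∧ β = 0 := by
  have hβ : β = 0 := by
    by_contra hβ
    apply hxK
    have hb' : algebraMap K E β ≠ 0 :=
      (map_ne_zero_iff _ (algebraMap K E).injective).mpr hβ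
    refine ⟨-α / β, ?_⟩
    rw [map_div₀, map_neg, div_eq_iff hb']
    linear_combination -h
  refine ⟨?_, hβ⟩
  rw [hβ, map_zero, zero_mul, add_zero] at h
  exact (map_eq_zero_iff _ (algebraMap K E).injective).mp h

lemma quad_aux {K E : Type u} [Field K] [Field E] [Algebra K E] {x : E} {a : K}
    (hx2 : x ^ 2 = algebraMap K E a) (hxK : x ∉ Set.range (algebraMap K E))
    {c : E} (hc : ∃ u v : K, c = algebraMap K E u + algebraMap K E v * x)
    (hcsq : c ^ 2 = x ∨ c ^ 2 = -x) : ∃ u : K, a = -(4 * u ^ 4) := by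
  obtain ⟨u, v, rfl⟩ := hc
  obtain ⟨ε, hε, hcε⟩ : ∃ ε : K, ε ^ 2 = 1 ∧
      (algebraMap K E u + algebraMap K E v * x) ^ 2 = algebraMap K E ε * x := by
    rcases hcsq with h | h
    · exact ⟨1, one_pow 2, by rw [h, map_one, one_mul]⟩
    · exact ⟨-1, by ring, by rw [h, map_neg, map_one, neg_one_mul]⟩
  have key : algebraMap K E (u ^ 2 + a * v ^ 2) + algebraMap K E (2 * u * v - ε) * x = 0 := by
    simp only [map_add, map_mul, map_pow, map_sub, map_ofNat]
    linear_combination hcε - (algebraMap K E v) ^ 2 * hx2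
  obtain ⟨h0, h1⟩ := coords_quad hxK key
  have h2uv : 2 * u * v = ε := by linear_combination h1
  have h4uv : 4 * u ^ 2 * v ^ 2 = 1 := by
    have h := congrArg (fun t : K => t ^ 2) h2uv
    rw [hε] at h
    linear_combination h
  exact ⟨u, by linear_combination (4 * u ^ 2) * h0 - a * h4uv⟩

lemma mem_adjoin_quad {K E : Type u} [Field K] [Field E] [Algebra K E] {x : E}
    (hint : IsIntegral K x) (hdeg2 : (minpoly K x).natDegree = 2) (c : E) (hc : c ∈ K⟮x⟯) :
    ∃ u v : K, c = algebraMap K E u + algebraMap K E v * x := by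
  have hsub : c ∈ Algebra.adjoin K ({x} : Set E) := by
    rw [← IntermediateField.adjoin_simple_toSubalgebra_of_isAlgebraic hint.isAlgebraic]
    exact hc
  rw [Algebra.adjoin_singleton_eq_range_aeval] at hsub
  obtain ⟨p, hp⟩ := hsub
  have hmono : (minpoly K x).Monic := minpoly.monic hint
  set r := p %ₘ (minpoly K x) with hr
  have haevalr : aeval x r = c := by
    conv_rhs => rw [← hp]
    show aeval x r = aeval x p
    conv_rhs => rw [← modByMonic_add_div p (minpoly K x)]
    rw [map_add, map_mul, minpoly.aeval, zero_mul, add_zero]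
  have hdeg : r.natDegree ≤ 1 := by
    have h2 : r.natDegree < 2 := hdeg2 ▸ natDegree_modByMonic_lt p hmono
      (fun h1 => by rw [h1, natDegree_one] at hdeg2; omega)
    omega
  refine ⟨r.coeff 0, r.coeff 1, ?_⟩
  conv_lhs => rw [← haevalr, eq_X_add_C_of_natDegree_le_one hdeg]
  rw [map_add, map_mul, aeval_C, aeval_X, aeval_C]
  ring

theorem two_pow_aux (k : ℕ) : ∀ (K : Type u) [Field K], ∀ a : K,
    (∀ b : K, b ^ 2 ≠ a) → (∀ b : K, a ≠ -(4 * b ^ 4)) →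
    Irreducible ((X : K[X]) ^ 2 ^ k - C a) := by
  induction k with
  | zero => intro K _ a _ _; simpa using irreducible_X_sub_C a
  | succ k IH =>
    intro K _ a h2 h4
    have h2irr : Irreducible ((X : K[X]) ^ 2 - C a) :=
      X_pow_sub_C_irreducible_of_prime Nat.prime_two h2
    rw [pow_succ]
    apply X_pow_mul_sub_C_irreducible h2irr
    intro E _ _ x hx
    have hint : IsIntegral K x := by
      by_contra hni
      have h0 : minpoly K x = 0 := minpoly.eq_zero hni
      rw [hx] at h0
      have := congrArg natDegree h0
      rw [natDegree_X_pow_sub_C, natDegree_zero] at this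
      omega
    have hx2 : x ^ 2 = algebraMap K E a := by
      have h0 := minpoly.aeval K x
      rw [hx] at h0
      simpa [sub_eq_zero] using h0
    have hxK : x ∉ Set.range (algebraMap K E) := by
      rintro ⟨y, rfl⟩
      have h1 : minpoly K (algebraMap K E y) = X - C y := minpoly.eq_X_sub_C E y
      rw [hx] at h1
      have := congrArg natDegree h1
      rw [natDegree_X_pow_sub_C, natDegree_X_sub_C] at this
      omega
    apply IH
    · intro b hb
      have hbE : ((algebraMap (↥K⟮x⟯) E) b) ^ 2 = x := by
        rw [← map_pow, hb, AdjoinSimple.algebraMap_gen]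
      have hdeg2 : (minpoly K x).natDegree = 2 := by rw [hx, natDegree_X_pow_sub_C]
      obtain ⟨u, hu⟩ := quad_aux hx2 hxK
        (mem_adjoin_quad hint hdeg2 _ (SetLike.coe_mem b)) (Or.inl hbE)
      exact h4 u hu
    · intro b hb
      have hbE : ((algebraMap (↥K⟮x⟯) E) (2 * b ^ 2)) ^ 2 = -x := by
        have hb' : AdjoinSimple.gen K x = -((2 * b ^ 2) ^ 2) := by rw [hb]; ring
        have hx' := congrArg (algebraMap (↥K⟮x⟯) E) hb'
        rw [AdjoinSimple.algebraMap_gen, (algebraMap (↥K⟮x⟯) E).map_neg,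
          (algebraMap (↥K⟮x⟯) E).map_pow] at hx'
        linear_combination hx'
      have hdeg2 : (minpoly K x).natDegree = 2 := by rw [hx, natDegree_X_pow_sub_C]
      obtain ⟨u, hu⟩ := quad_aux hx2 hxK
        (mem_adjoin_quad hint hdeg2 _ (SetLike.coe_mem (2 * b ^ 2))) (Or.inr hbE)
      exact h4 u hu


theorem capelli_irreducible {K : Type u} [Field K] {a : K}
    (hp : ∀ p : ℕ, p.Prime → ∀ b : K, b ^ p ≠ a) (h4 : ∀ b : K, a ≠ -(4 * b ^ 4))
    {m : ℕ} (hm : 0 < m) : Irreducible ((X : K[X]) ^ m - C a) := by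
  set k := m.factorization 2 with hk
  set q := m / 2 ^ k with hq
  have hm0 : m ≠ 0 := hm.ne'
  have hqodd : Odd q := by
    rw [Nat.odd_iff]
    rcases Nat.even_or_odd q with he | ho
    · exact absurd he.two_dvd (Nat.not_dvd_ordCompl Nat.prime_two hm0)
    · exact Nat.odd_iff.mp ho
  have hqm : q * 2 ^ k = m := by
    rw [hq, hk, mul_comm]
    exact Nat.ordProj_mul_ordCompl_eq_self m 2
  rcases Nat.eq_zero_or_pos k with hk0 | hkpos
  · rw [← hqm, hk0, pow_zero, mul_one]
    exact X_pow_sub_C_irreducible_of_odd hqodd (fun p hp' _ b => hp p hp' b)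
  · rw [← hqm]
    apply X_pow_mul_sub_C_irreducible (two_pow_aux k K a (hp 2 Nat.prime_two) h4)
    intro E _ _ x hx
    have hint : IsIntegral K x := by
      by_contra hni
      have h0 : minpoly K x = 0 := minpoly.eq_zero hni
      rw [hx] at h0
      have := congrArg natDegree h0
      rw [natDegree_X_pow_sub_C, natDegree_zero] at this
      exact absurd this (by positivity)
    apply X_pow_sub_C_irreducible_of_odd hqodd
    intro p hpp hpq b hb
    have hnormgen : Algebra.norm K (AdjoinSimple.gen K x) = -a := by
      rw [← IntermediateField.adjoin.powerBasis_gen hint,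
        Algebra.PowerBasis.norm_gen_eq_coeff_zero_minpoly,
        IntermediateField.adjoin.powerBasis_gen, IntermediateField.minpoly_gen, hx]
      have hdim : (IntermediateField.adjoin.powerBasis hint).dim = 2 ^ k := by
        rw [IntermediateField.adjoin.powerBasis_dim, hx, natDegree_X_pow_sub_C]
      rw [hdim]
      have heven : Even (2 ^ k) := (Nat.even_pow).mpr ⟨even_two, hkpos.ne'⟩
      have h2k : 2 ^ k ≠ 0 := by positivity
      simp [coeff_X_pow, heven.neg_one_pow, h2k]
      exact fun h => h2k h.symm
    have hoddp : Odd p := hpp.odd_of_ne_two (by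
      rintro rfl
      rw [Nat.odd_iff] at hqodd
      omega)
    apply hp p hpp (-(Algebra.norm K b))
    rw [hoddp.neg_pow, ← map_pow, hb, hnormgen, neg_neg]



variable {F : Type u} [Field F]

lemma tor_unit_iff {u : Fˣ} : IsRootOfUnityElem (u : F) ↔ IsOfFinOrder u := by
  constructor
  · rintro ⟨n, hn, h1⟩
    exact isOfFinOrder_iff_pow_eq_one.mpr ⟨n, hn, Units.ext (by push_cast [h1]; rfl)⟩
  · intro h
    obtain ⟨n, hn, h1⟩ := isOfFinOrder_iff_pow_eq_one.mp h
    exact ⟨n, hn, by rw [← Units.val_pow_eq_pow_val, h1, Units.val_one]⟩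

lemma tor_zpow {x : Fˣ} (h : IsOfFinOrder x) (β : ℤ) : IsOfFinOrder (x ^ β) := by
  obtain ⟨n, hn, h1⟩ := isOfFinOrder_iff_pow_eq_one.mp h
  refine isOfFinOrder_iff_pow_eq_one.mpr ⟨n, hn, ?_⟩
  rw [← zpow_natCast (x ^ β) n, ← zpow_mul, mul_comm, zpow_mul, zpow_natCast, h1, one_zpow]

lemma unit_tor_of_pow_tor {x : Fˣ} {N : ℕ} (hN : 0 < N) {ζ : Fˣ} (hζ : IsOfFinOrder ζ)
    (h : x ^ N = ζ) : IsOfFinOrder x := by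
  obtain ⟨n, hn, hζn⟩ := isOfFinOrder_iff_pow_eq_one.mp hζ
  exact isOfFinOrder_iff_pow_eq_one.mpr
    ⟨N * n, by positivity, by rw [pow_mul, h, hζn]⟩

lemma exists_tor_mul {x y : Fˣ} {N : ℕ} (hN : 0 < N) {ζ : Fˣ} (hζ : IsOfFinOrder ζ)
    (h : x ^ N = ζ * y ^ N) : ∃ ξ : Fˣ, IsOfFinOrder ξ ∧ x = ξ * y := by
  refine ⟨x * y⁻¹, ?_, by group⟩
  apply unit_tor_of_pow_tor hN hζ
  rw [mul_pow, inv_pow, h, mul_inv_cancel_right]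

lemma combine_div {b w : Fˣ} {M k : ℕ} (hM : 0 < M) {ζ : Fˣ} (hζ : IsOfFinOrder ζ)
    (h : b ^ k = ζ * w ^ M) :
    ∃ ξ t : Fˣ, IsOfFinOrder ξ ∧ b = ξ * t ^ (M / Nat.gcd M k) := by
  set g := Nat.gcd M k with hg
  have hgpos : 0 < g := Nat.gcd_pos_of_pos_left k hM
  set M' := M / g with hM'
  set k' := k / g with hk'
  have hMg : g * M' = M := Nat.mul_div_cancel' (Nat.gcd_dvd_left M k)
  have hkg : g * k' = k := Nat.mul_div_cancel' (Nat.gcd_dvd_right M k)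
  have h1 : (b ^ k') ^ g = ζ * (w ^ M') ^ g := by
    rw [← pow_mul, ← pow_mul, mul_comm k' g, mul_comm M' g, hMg, hkg, h]
  obtain ⟨ξ₁, hξ₁, hb'⟩ := exists_tor_mul hgpos hζ h1
  have hcop : Nat.Coprime M' k' := Nat.coprime_div_gcd_div_gcd hgpos
  obtain ⟨α, β, hαβ⟩ : IsCoprime (M' : ℤ) (k' : ℤ) := by
    rw [Int.isCoprime_iff_gcd_eq_one]
    exact_mod_cast hcop
  refine ⟨ξ₁ ^ β, w ^ β * b ^ α, tor_zpow hξ₁ β, ?_⟩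
  have hW : (w ^ (M' : ℕ) : Fˣ) ^ (β : ℤ) = (w ^ (β : ℤ)) ^ (M' : ℤ) := by
    rw [← zpow_natCast w M', ← zpow_mul, mul_comm, zpow_mul]
  have hK : (b ^ (k' : ℕ) : Fˣ) ^ (β : ℤ) = (b ^ (β : ℤ)) ^ (k' : ℤ) := by
    rw [← zpow_natCast b k', ← zpow_mul, mul_comm, zpow_mul]
  calc b = b ^ (α * M' + β * k' : ℤ) := by rw [hαβ, zpow_one]
    _ = (b ^ (α : ℤ)) ^ (M' : ℤ) * (b ^ (k' : ℕ)) ^ (β : ℤ) := by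
        rw [zpow_add, zpow_mul, zpow_mul, ← hK]
    _ = (b ^ (α : ℤ)) ^ (M' : ℤ) * (ξ₁ * w ^ M') ^ (β : ℤ) := by rw [hb']
    _ = (b ^ (α : ℤ)) ^ (M' : ℤ) * (ξ₁ ^ (β : ℤ) * (w ^ (β : ℤ)) ^ (M' : ℤ)) := by
        rw [mul_zpow, hW]
    _ = ξ₁ ^ β * ((w ^ (β : ℤ)) ^ (M' : ℤ) * (b ^ (α : ℤ)) ^ (M' : ℤ)) := by
        rw [mul_left_comm, mul_comm ((b ^ (α : ℤ)) ^ (M' : ℤ))]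
    _ = ξ₁ ^ β * (w ^ (β : ℤ) * b ^ (α : ℤ)) ^ (M' : ℤ) := by rw [mul_zpow]
    _ = ξ₁ ^ β * (w ^ β * b ^ α) ^ (M' : ℕ) := by rw [zpow_natCast]


lemma tor_natpow {x : Fˣ} (h : IsOfFinOrder x) (d : ℕ) : IsOfFinOrder (x ^ d) := by
  have := tor_zpow h (d : ℤ)
  rwa [zpow_natCast] at this

lemma bar_int (z : AlgebraicClosure F) : IsIntegral F z :=
  (Algebra.IsAlgebraic.isAlgebraic (R := F) z).isIntegral

variable {a : F} {N : ℕ} {bu ζu : Fˣ}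

theorem pow_root_dvd (ha : a ≠ 0) (hN : 0 < N) (hζu : IsOfFinOrder ζu)
    (hab : a = (ζu : F) * (bu : F) ^ N)
    (hmax : ∀ n : ℕ, 0 < n → (∃ ζ g : F, IsRootOfUnityElem ζ ∧ g ^ n = ζ * a) → n ≤ N)
    {M : ℕ} (hM : 0 < M) {z : AlgebraicClosure F}
    (hz : z ^ M = algebraMap F (AlgebraicClosure F) a) :
    M ∣ N * Module.finrank F F⟮z⟯ := by
  haveI : FiniteDimensional F F⟮z⟯ := adjoin.finiteDimensional (bar_int z)
  set d := Module.finrank F ↥F⟮z⟯ with hd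
  have hdpos : 0 < d := Module.finrank_pos
  set gz := AdjoinSimple.gen F z with hgz
  have hg : gz ^ M = algebraMap F ↥F⟮z⟯ a := by
    apply (algebraMap (↥F⟮z⟯) (AlgebraicClosure F)).injective
    rw [map_pow, AdjoinSimple.algebraMap_gen, hz, ← IsScalarTower.algebraMap_apply]
  have hw : (Algebra.norm F gz) ^ M = a ^ d := by
    rw [← map_pow, hg, Algebra.norm_algebraMap]
  have hw0 : Algebra.norm F gz ≠ 0 := by
    intro h0
    rw [h0, zero_pow hM.ne'] at hw
    exact (pow_ne_zero d ha) hw.symm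
  set W := Units.mk0 _ hw0 with hW
  have hbu : bu ^ (N * d) = (ζu⁻¹) ^ d * W ^ M := by
    apply Units.ext
    rw [Units.val_mul, Units.val_pow_eq_pow_val, Units.val_pow_eq_pow_val,
      Units.val_inv_eq_inv_val]
    show (bu : F) ^ (N * d) = ((ζu : F))⁻¹ ^ d * (Algebra.norm F gz) ^ M
    rw [hw, hab, mul_pow, ← pow_mul, inv_pow, inv_mul_cancel_left₀
      (pow_ne_zero d (Units.ne_zero ζu)), mul_comm N d]
  obtain ⟨ξ, t, hξ, hb⟩ := combine_div hM (tor_natpow hζu.inv d) hbu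
  set k0 := M / Nat.gcd M (N * d) with hk0
  have hk0dvd : Nat.gcd M (N * d) ∣ M := Nat.gcd_dvd_left _ _
  have hgcdpos : 0 < Nat.gcd M (N * d) := Nat.gcd_pos_of_pos_left _ hM
  have hk0pos : 0 < k0 := Nat.div_pos (Nat.le_of_dvd hM hk0dvd) hgcdpos
  have hmem : ∃ ζ g : F, IsRootOfUnityElem ζ ∧ g ^ (k0 * N) = ζ * a := by
    refine ⟨(((ζu * ξ ^ N)⁻¹ : Fˣ) : F), (t : F),
      tor_unit_iff.mpr ((hζu.mul (tor_natpow hξ N)).inv), ?_⟩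
    have hbF : (bu : F) = (ξ : F) * (t : F) ^ k0 := by
      have := congrArg Units.val hb
      rwa [Units.val_mul, Units.val_pow_eq_pow_val] at this
    rw [Units.val_inv_eq_inv_val, Units.val_mul, Units.val_pow_eq_pow_val, hab, hbF]
    rw [mul_pow, ← pow_mul, mul_comm k0 N]
    field_simp
  have hle := hmax (k0 * N) (by positivity) hmem
  have hk01 : k0 = 1 := by
    have h1 : k0 ≤ 1 := Nat.le_of_mul_le_mul_right (by simpa using hle) hN
    omega
  have hMg : M = Nat.gcd M (N * d) := by
    have h2 := Nat.div_mul_cancel hk0dvd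
    rw [← hk0, hk01, one_mul] at h2
    exact h2.symm
  exact hMg ▸ Nat.gcd_dvd_right _ _



variable (F) in
/-- degree of an element of the algebraic closure -/
noncomputable def DD (z : AlgebraicClosure F) : ℕ := Module.finrank F ↥F⟮z⟯

lemma DD_pos (z : AlgebraicClosure F) : 0 < DD F z := by
  haveI : FiniteDimensional F ↥F⟮z⟯ := adjoin.finiteDimensional (bar_int z)
  exact Module.finrank_pos

lemma DD_eq_minpoly (z : AlgebraicClosure F) : DD F z = (minpoly F z).natDegree :=
  adjoin.finrank (bar_int z)

lemma DD_algebraMap (x : F) : DD F (algebraMap F (AlgebraicClosure F) x) = 1 := by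
  rw [DD, adjoin_simple_eq_bot_iff.mpr, IntermediateField.finrank_bot]
  rw [IntermediateField.mem_bot]
  exact ⟨x, rfl⟩

lemma DD_tower (c z : AlgebraicClosure F) (hc : c ∈ F⟮z⟯) :
    DD F z = DD F c * (minpoly (↥F⟮c⟯) z).natDegree := by
  set K1 := ↥F⟮c⟯
  have hzK1 : IsIntegral K1 z := (bar_int z).tower_top
  have e1 : restrictScalars F (IntermediateField.adjoin K1 {z}) = F⟮z⟯ := by
    rw [adjoin_adjoin_left]
    apply le_antisymm
    · rw [adjoin_le_iff]
      rintro w (rfl | rfl)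
      · exact hc
      · exact mem_adjoin_simple_self F w
    · exact IntermediateField.adjoin.mono F _ _ Set.subset_union_right
  have e2 : Module.finrank F K1 * Module.finrank K1 ↥(IntermediateField.adjoin K1 {z})
      = Module.finrank F ↥(IntermediateField.adjoin K1 {z}) :=
    Module.finrank_mul_finrank F K1 _
  have e4 : Module.finrank K1 ↥(IntermediateField.adjoin K1 {z})
      = (minpoly K1 z).natDegree := adjoin.finrank hzK1
  have e3 : Module.finrank F ↥(IntermediateField.adjoin K1 {z}) = DD F z := by
    rw [DD, ← e1]
    rfl
  rw [← e3, ← e2, e4]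
  rfl

variable (F) in
/-- `z` has maximal degree growth for all root extractions -/
def GoodE (z : AlgebraicClosure F) : Prop :=
  ∀ m : ℕ, 0 < m → ∀ z' : AlgebraicClosure F, z' ^ m = z → DD F z' = m * DD F z

def BadE (c : AlgebraicClosure F) : Prop :=
  (∃ q : ℕ, q.Prime ∧ ∃ e : ↥F⟮c⟯, (e : AlgebraicClosure F) ^ q = c) ∨
  (∃ u : ↥F⟮c⟯, c = -(4 * (u : AlgebraicClosure F) ^ 4))

lemma good_of_not_bad {c : AlgebraicClosure F} (h : ¬ BadE c) : GoodE F c := by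
  rw [BadE, not_or] at h
  obtain ⟨h1, h2⟩ := h
  push_neg at h1 h2
  intro m hm z' hz'
  set K1 := ↥F⟮c⟯
  set cg := AdjoinSimple.gen F c with hcg
  have hirr : Irreducible ((X : K1[X]) ^ m - C cg) := by
    apply capelli_irreducible ?_ ?_ hm
    · intro p hpp e he
      refine h1 p hpp e ?_
      have := congrArg (algebraMap K1 (AlgebraicClosure F)) he
      rwa [map_pow, AdjoinSimple.algebraMap_gen] at this
    · intro e he
      refine h2 e ?_
      have := congrArg (algebraMap K1 (AlgebraicClosure F)) he
      rwa [AdjoinSimple.algebraMap_gen, (algebraMap K1 (AlgebraicClosure F)).map_neg,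
        (algebraMap K1 (AlgebraicClosure F)).map_mul,
        map_ofNat (algebraMap K1 (AlgebraicClosure F)),
        (algebraMap K1 (AlgebraicClosure F)).map_pow] at this
  have hz'int : IsIntegral K1 z' := (bar_int z').tower_top
  have haev : (aeval z') ((X : K1[X]) ^ m - C cg) = 0 := by
    rw [map_sub, map_pow, aeval_X, aeval_C, AdjoinSimple.algebraMap_gen, hz', sub_self]
  have hmin : (X : K1[X]) ^ m - C cg = minpoly K1 z' :=
    minpoly.eq_of_irreducible_of_monic hirr haev (monic_X_pow_sub_C _ hm.ne')
  have hcz : c ∈ F⟮z'⟯ := by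
    rw [← hz']
    exact pow_mem (mem_adjoin_simple_self F z') m
  rw [DD_tower c z' hcz, ← hmin, natDegree_X_pow_sub_C, mul_comm]

lemma good_up {c z : AlgebraicClosure F} {k : ℕ} (hk : 0 < k) (hzk : z ^ k = c)
    (hgood : GoodE F c) : GoodE F z := by
  intro m hm z' hz'
  have h1 : DD F z = k * DD F c := hgood k hk z hzk
  have h2 : DD F z' = (m * k) * DD F c := by
    refine hgood (m * k) (by positivity) z' ?_
    rw [pow_mul, hz', hzk]
  rw [h1, h2]
  ring


lemma nonunit_of_natDegree_pos {K : Type u} [Field K] {p : K[X]} (h : 0 < p.natDegree) :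
    ¬ IsUnit p := fun hu => by rw [natDegree_eq_zero_of_isUnit hu] at h; omega

lemma aux_quad_deg {K : Type u} [Field K] (s v : K) {t : ℕ} (ht : 0 < t) :
    (((X : K[X]) ^ t) ^ 2 + C s * X ^ t + C v).natDegree = 2 * t := by
  rw [← pow_mul, mul_comm t 2]
  compute_degree!
  any_goals omega
  rw [if_neg (by omega), if_neg (by omega)]
  norm_num

lemma aux_quad_factor {K : Type u} [Field K] (u : K) (t : ℕ) :
    (X : K[X]) ^ (t * 4) - C (-(4 * u ^ 4))
      = (((X : K[X]) ^ t) ^ 2 - C (2 * u) * X ^ t + C (2 * u ^ 2))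
        * (((X : K[X]) ^ t) ^ 2 + C (2 * u) * X ^ t + C (2 * u ^ 2)) := by
  simp only [map_neg, map_mul, map_pow, map_ofNat, pow_mul]
  ring

lemma bad_reducible (ha : a ≠ 0) (hN : 0 < N)
    (hζu : IsOfFinOrder ζu) (hab : a = (ζu : F) * (bu : F) ^ N)
    (hmax : ∀ n : ℕ, 0 < n → (∃ ζ g : F, IsRootOfUnityElem ζ ∧ g ^ n = ζ * a) → n ≤ N)
    {c : AlgebraicClosure F} {n : ℕ} (hn : 0 < n)
    (hc : c ^ n = algebraMap F (AlgebraicClosure F) a) (hbad : BadE c) :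
    ¬ Irreducible ((X : (↥F⟮c⟯)[X]) ^ (4 * N.factorial) - C (AdjoinSimple.gen F c)) := by
  intro hirr
  set K1 := ↥F⟮c⟯
  set kb := 4 * N.factorial with hkb
  have hkbpos : 0 < kb := by positivity
  rcases hbad with ⟨q, hq, e, he⟩ | ⟨u, hu⟩
  · have hq0 : 0 < q := hq.pos
    have hfe : F⟮(e : AlgebraicClosure F)⟯ = F⟮c⟯ := by
      apply le_antisymm
      · rw [adjoin_simple_le_iff]; exact e.2
      · rw [adjoin_simple_le_iff]
        have h5 : ((e : AlgebraicClosure F)) ^ q ∈ F⟮(e : AlgebraicClosure F)⟯ :=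
          pow_mem (mem_adjoin_simple_self F _) q
        rwa [he] at h5
    have hDe : Module.finrank F ↥F⟮(e : AlgebraicClosure F)⟯ = Module.finrank F ↥F⟮c⟯ :=
      congrArg (fun (E : IntermediateField F (AlgebraicClosure F)) => Module.finrank F ↥E) hfe
    have henq : (e : AlgebraicClosure F) ^ (n * q) = algebraMap F (AlgebraicClosure F) a := by
      rw [mul_comm, pow_mul, he, hc]
    have hdvd1 := pow_root_dvd ha hN hζu hab hmax (M := n * q) (by positivity) henq
    rw [hDe] at hdvd1
    have hdvd1' : n * q ∣ N * DD F c := hdvd1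
    obtain ⟨s, hs0⟩ := pow_root_dvd ha hN hζu hab hmax (M := n) hn hc
    have hs : N * DD F c = n * s := hs0
    have hqs : q ∣ s := by
      have h2 : n * q ∣ n * s := by rw [← hs]; exact hdvd1'
      exact (Nat.mul_dvd_mul_iff_left hn).mp h2
    have hDc_le : DD F c ≤ n := by
      rw [DD_eq_minpoly]
      refine le_trans (natDegree_le_of_dvd (minpoly.dvd F c ?_)
        (X_pow_sub_C_ne_zero hn a)) ?_
      · rw [map_sub, map_pow, aeval_X, aeval_C, hc, sub_self]
      · rw [natDegree_X_pow_sub_C]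
    have hspos : 0 < s := by
      rcases Nat.eq_zero_or_pos s with h0 | h0
      · exfalso
        rw [h0, mul_zero] at hs
        have := DD_pos (F := F) c
        nlinarith
      · exact h0
    have hsN : s ≤ N := by nlinarith [DD_pos (F := F) c]
    have hqN : q ≤ N := le_trans (Nat.le_of_dvd hspos hqs) hsN
    have hqkb : q ∣ kb := Dvd.dvd.mul_left (Nat.dvd_factorial hq0 hqN) 4
    have hqlekb : q ≤ kb := Nat.le_of_dvd hkbpos hqkb
    have heg : e ^ q = AdjoinSimple.gen F c := by
      apply (algebraMap K1 (AlgebraicClosure F)).injective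
      rw [map_pow, AdjoinSimple.algebraMap_gen]
      exact he
    have hdvdf : ((X : K1[X]) ^ (kb / q) - C e) ∣ (X : K1[X]) ^ kb - C (AdjoinSimple.gen F c) := by
      have h3 := sub_dvd_pow_sub_pow ((X : K1[X]) ^ (kb / q)) (C e) q
      rwa [← pow_mul, Nat.div_mul_cancel hqkb, ← map_pow, heg] at h3
    obtain ⟨g, hg⟩ := hdvdf
    have hfdeg : ((X : K1[X]) ^ (kb / q) - C e).natDegree = kb / q := natDegree_X_pow_sub_C
    have hdivpos : 0 < kb / q := Nat.div_pos hqlekb hq0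
    rcases hirr.isUnit_or_isUnit hg with h1 | h1
    · exact nonunit_of_natDegree_pos (by rw [hfdeg]; exact hdivpos) h1
    · have hf0 : ((X : K1[X]) ^ (kb / q) - C e) ≠ 0 := X_pow_sub_C_ne_zero hdivpos e
      have hg0 : g ≠ 0 := by
        rintro rfl
        rw [mul_zero] at hg
        exact (X_pow_sub_C_ne_zero hkbpos (AdjoinSimple.gen F c)) hg
      have h4 := congrArg natDegree hg
      rw [natDegree_X_pow_sub_C, natDegree_mul hf0 hg0, hfdeg,
        natDegree_eq_zero_of_isUnit h1, add_zero] at h4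
      have hlt : kb / q < kb := Nat.div_lt_self hkbpos hq.one_lt
      omega
  · have hug : AdjoinSimple.gen F c = -(4 * u ^ 4) := by
      apply (algebraMap K1 (AlgebraicClosure F)).injective
      rw [AdjoinSimple.algebraMap_gen, (algebraMap K1 (AlgebraicClosure F)).map_neg,
        (algebraMap K1 (AlgebraicClosure F)).map_mul,
        map_ofNat (algebraMap K1 (AlgebraicClosure F)),
        (algebraMap K1 (AlgebraicClosure F)).map_pow]
      exact hu
    set t := N.factorial with ht
    have htpos : 0 < t := N.factorial_pos
    have hfac : (X : K1[X]) ^ kb - C (AdjoinSimple.gen F c)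
        = (((X : K1[X]) ^ t) ^ 2 - C (2 * u) * X ^ t + C (2 * u ^ 2))
          * (((X : K1[X]) ^ t) ^ 2 + C (2 * u) * X ^ t + C (2 * u ^ 2)) := by
      rw [hug, hkb, show 4 * t = t * 4 from mul_comm 4 t]
      exact aux_quad_factor u t
    have hfdeg : (((X : K1[X]) ^ t) ^ 2 - C (2 * u) * X ^ t + C (2 * u ^ 2)).natDegree
        = 2 * t := by
      rw [sub_eq_add_neg, ← neg_mul, ← map_neg]
      exact aux_quad_deg _ _ htpos
    have hgdeg : (((X : K1[X]) ^ t) ^ 2 + C (2 * u) * X ^ t + C (2 * u ^ 2)).natDegree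
        = 2 * t := aux_quad_deg _ _ htpos
    rcases hirr.isUnit_or_isUnit hfac with h1 | h1
    · exact nonunit_of_natDegree_pos (by rw [hfdeg]; positivity) h1
    · exact nonunit_of_natDegree_pos (by rw [hgdeg]; positivity) h1

lemma rel_lt (ha : a ≠ 0) (hN : 0 < N)
    (hζu : IsOfFinOrder ζu) (hab : a = (ζu : F) * (bu : F) ^ N)
    (hmax : ∀ n : ℕ, 0 < n → (∃ ζ g : F, IsRootOfUnityElem ζ ∧ g ^ n = ζ * a) → n ≤ N)
    {c z : AlgebraicClosure F} {n : ℕ} (hn : 0 < n)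
    (hc : c ^ n = algebraMap F (AlgebraicClosure F) a)
    (hz : z ^ (4 * N.factorial) = c) (hbad : BadE c) :
    (minpoly (↥F⟮c⟯) z).natDegree < 4 * N.factorial := by
  set K1 := ↥F⟮c⟯
  set kb := 4 * N.factorial with hkb
  have hkbpos : 0 < kb := by positivity
  have hzint : IsIntegral K1 z := (bar_int z).tower_top
  have hdvd : minpoly K1 z ∣ (X : K1[X]) ^ kb - C (AdjoinSimple.gen F c) := by
    apply minpoly.dvd
    rw [map_sub, map_pow, aeval_X, aeval_C, AdjoinSimple.algebraMap_gen, hz, sub_self]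
  have hle : (minpoly K1 z).natDegree ≤ kb := by
    refine le_trans (natDegree_le_of_dvd hdvd
      (X_pow_sub_C_ne_zero hkbpos _)) ?_
    rw [natDegree_X_pow_sub_C]
  rcases lt_or_eq_of_le hle with h | h
  · exact h
  · exfalso
    have hassoc := associated_of_dvd_of_natDegree_le hdvd
      (X_pow_sub_C_ne_zero hkbpos _) (by rw [natDegree_X_pow_sub_C, h])
    have heq := Polynomial.eq_of_monic_of_associated (minpoly.monic hzint)
      (monic_X_pow_sub_C _ hkbpos.ne') hassoc
    exact bad_reducible ha hN hζu hab hmax hn hc hbad (heq ▸ minpoly.irreducible hzint)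


lemma descent (ha : a ≠ 0) (hN : 0 < N)
    (hζu : IsOfFinOrder ζu) (hab : a = (ζu : F) * (bu : F) ^ N)
    (hmax : ∀ n : ℕ, 0 < n → (∃ ζ g : F, IsRootOfUnityElem ζ ∧ g ^ n = ζ * a) → n ≤ N) :
    ∀ j n : ℕ, 0 < n →
    (∀ c : AlgebraicClosure F, c ^ n = algebraMap F (AlgebraicClosure F) a →
      ¬ GoodE F c → N * DD F c ≤ j * n) →
    ∀ z : AlgebraicClosure F,
      z ^ (n * (4 * N.factorial) ^ j) = algebraMap F (AlgebraicClosure F) a → GoodE F z := by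
  intro j
  induction j with
  | zero =>
    intro n hn hbound z hz
    rw [pow_zero, mul_one] at hz
    by_contra hng
    have h1 := hbound z hz hng
    have h2 := DD_pos (F := F) z
    nlinarith [hN]
  | succ j IH =>
    intro n hn hbound z hz
    set kb := 4 * N.factorial with hkb
    have hkbpos : 0 < kb := by positivity
    refine IH (n * kb) (by positivity) ?_ z ?_
    swap
    · rw [show n * kb * kb ^ j = n * kb ^ (j + 1) from by ring]
      exact hz
    intro w hw hng
    set cw := w ^ kb with hcw
    have hcwn : cw ^ n = algebraMap F (AlgebraicClosure F) a := by
      rw [hcw, ← pow_mul, mul_comm kb n]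
      exact hw
    have hcwbad : ¬ GoodE F cw := fun hgood => hng (good_up hkbpos hcw.symm hgood)
    have hbad : BadE cw := by
      by_contra hnb
      exact hcwbad (good_of_not_bad hnb)
    have hble := hbound cw hcwn hcwbad
    have hcmem : cw ∈ F⟮w⟯ := hcw ▸ pow_mem (mem_adjoin_simple_self F w) kb
    have htw := DD_tower cw w hcmem
    set r := (minpoly (↥F⟮cw⟯) w).natDegree with hr
    have hrlt : r < kb := rel_lt ha hN hζu hab hmax hn hcwn hcw.symm hbad
    obtain ⟨s, hsw0⟩ := pow_root_dvd ha hN hζu hab hmax (M := n * kb) (by positivity) hw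
    have hsw : N * DD F w = (n * kb) * s := hsw0
    have hxpos : 0 < (j + 1) * n := by positivity
    have hlt : N * DD F w < (j + 1) * (n * kb) := by
      nlinarith [htw, hble, hrlt, DD_pos (F := F) cw]
    have hsle : s ≤ j := by
      by_contra hc0
      push_neg at hc0
      have h6 : (n * kb) * (j + 1) ≤ (n * kb) * s := Nat.mul_le_mul_left _ hc0
      nlinarith [hsw, hlt, h6]
    rw [hsw]
    calc (n * kb) * s ≤ (n * kb) * j := Nat.mul_le_mul_left _ hsle
      _ = j * (n * kb) := by ring

lemma all_roots_good (ha : a ≠ 0) (hN : 0 < N)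
    (hζu : IsOfFinOrder ζu) (hab : a = (ζu : F) * (bu : F) ^ N)
    (hmax : ∀ n : ℕ, 0 < n → (∃ ζ g : F, IsRootOfUnityElem ζ ∧ g ^ n = ζ * a) → n ≤ N)
    (z : AlgebraicClosure F)
    (hz : z ^ ((4 * N.factorial) ^ N) = algebraMap F (AlgebraicClosure F) a) :
    GoodE F z := by
  refine descent ha hN hζu hab hmax N 1 one_pos ?_ z (by rwa [one_mul])
  intro c hc _
  rw [pow_one] at hc
  rw [hc, DD_algebraMap]

theorem good_heredity_core (ha : a ≠ 0) (hN : 0 < N)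
    (hζu : IsOfFinOrder ζu) (hab : a = (ζu : F) * (bu : F) ^ N)
    (hmax : ∀ n : ℕ, 0 < n → (∃ ζ g : F, IsRootOfUnityElem ζ ∧ g ^ n = ζ * a) → n ≤ N) :
    HasGoodHeredity ((X : F[X]) - C a) := by
  classical
  set nstar := (4 * N.factorial) ^ N with hnstar
  have hnpos : 0 < nstar := by positivity
  refine ⟨nstar, hnpos, ?_⟩
  set P := (X : F[X]) ^ nstar - C a with hP
  have hPmonic : P.Monic := monic_X_pow_sub_C a hnpos.ne'
  have hP0 : P ≠ 0 := hPmonic.ne_zero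
  refine ⟨UniqueFactorizationMonoid.normalizedFactors P, ?_, ?_⟩
  · intro Q hQ
    have hQirr : Irreducible Q :=
      UniqueFactorizationMonoid.irreducible_of_normalized_factor Q hQ
    have hQmonic : Q.Monic := by
      have h1 := UniqueFactorizationMonoid.normalize_normalized_factor Q hQ
      rw [← h1]
      exact monic_normalize hQirr.ne_zero
    have hQdvd : Q ∣ P := UniqueFactorizationMonoid.dvd_of_mem_normalizedFactors hQ
    obtain ⟨z, hz⟩ := IsAlgClosed.exists_aeval_eq_zero (AlgebraicClosure F) Q
      (ne_of_gt (natDegree_pos_iff_degree_pos.mp hQirr.natDegree_pos))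
    have hzP : z ^ nstar = algebraMap F (AlgebraicClosure F) a := by
      have h0 : aeval z P = 0 := by
        obtain ⟨R, hR⟩ := hQdvd
        rw [hR, map_mul, hz, zero_mul]
      rw [hP, map_sub, map_pow, aeval_X, aeval_C, sub_eq_zero] at h0
      exact h0
    have hQmin : Q = minpoly F z := minpoly.eq_of_irreducible_of_monic hQirr hz hQmonic
    have hgood : GoodE F z := all_roots_good ha hN hζu hab hmax z hzP
    intro m hm
    obtain ⟨z', hz'root⟩ := IsAlgClosed.exists_root ((X : (AlgebraicClosure F)[X]) ^ m - C z)
      (by rw [degree_X_pow_sub_C hm]; exact_mod_cast hm.ne')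
    have hz' : z' ^ m = z := by
      have := hz'root
      rw [IsRoot, eval_sub, eval_pow, eval_X, eval_C, sub_eq_zero] at this
      exact this
    have hDz' : DD F z' = m * DD F z := hgood m hm z' hz'
    have hcompmonic : (Q.comp (X ^ m)).Monic :=
      hQmonic.comp (monic_X_pow m) (by rw [natDegree_X_pow]; omega)
    have haev : aeval z' (Q.comp (X ^ m)) = 0 := by
      rw [aeval_comp, map_pow, aeval_X, hz', ← hz]
    have hdeg : (minpoly F z').natDegree = (Q.comp (X ^ m)).natDegree := by
      rw [natDegree_comp, natDegree_X_pow, ← DD_eq_minpoly, hDz', DD_eq_minpoly, ← hQmin,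
        mul_comm]
    have hdvd : minpoly F z' ∣ Q.comp (X ^ m) := minpoly.dvd F z' haev
    have hassoc := associated_of_dvd_of_natDegree_le hdvd hcompmonic.ne_zero (le_of_eq hdeg.symm)
    have heq := Polynomial.eq_of_monic_of_associated (minpoly.monic (bar_int z')) hcompmonic hassoc
    rw [← heq]
    exact minpoly.irreducible (bar_int z')
  · rw [sub_comp, X_comp, C_comp]
    have hassoc := UniqueFactorizationMonoid.prod_normalizedFactors hP0
    have hprodmonic : (UniqueFactorizationMonoid.normalizedFactors P).prod.Monic := by
      have h1 := monic_multiset_prod_of_monic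
        (UniqueFactorizationMonoid.normalizedFactors P) id ?_
      · rwa [Multiset.map_id] at h1
      · intro Q hQ
        have h2 := UniqueFactorizationMonoid.normalize_normalized_factor Q hQ
        rw [← h2]
        exact monic_normalize
          (UniqueFactorizationMonoid.irreducible_of_normalized_factor Q hQ).ne_zero
    exact (Polynomial.eq_of_monic_of_associated hprodmonic hPmonic hassoc).symm



theorem good_heredity_of_modtor {F : Type u} [Field F] {a : F} (ha : a ≠ 0)
    (hator : ¬ IsRootOfUnityElem a) (hfin : RootlessModtorElem a) :
    HasGoodHeredity ((X : F[X]) - C a) := by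
  classical
  unfold RootlessModtorElem at hfin
  set S := {n : ℕ | 0 < n ∧ ∃ ζ g : F, IsRootOfUnityElem ζ ∧ g ^ n = ζ * a} with hS
  have hne : S.Nonempty := ⟨1, one_pos, 1, a, ⟨1, one_pos, one_pow 1⟩, by rw [pow_one, one_mul]⟩
  have hne' : hfin.toFinset.Nonempty := by rwa [Set.Finite.toFinset_nonempty]
  set N := hfin.toFinset.max' hne' with hN
  have hNmem : N ∈ S := by
    have := hfin.toFinset.max'_mem hne'
    rwa [Set.Finite.mem_toFinset] at this
  have hmax : ∀ n : ℕ, 0 < n → (∃ ζ g : F, IsRootOfUnityElem ζ ∧ g ^ n = ζ * a) → n ≤ N := by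
    intro n hn hex
    apply hfin.toFinset.le_max'
    rw [Set.Finite.mem_toFinset]
    exact ⟨hn, hex⟩
  obtain ⟨hNpos, ζ, g, hζ, hg⟩ := hNmem
  have hζ0 : ζ ≠ 0 := by
    obtain ⟨k, hk, h1⟩ := hζ
    intro h0
    rw [h0, zero_pow hk.ne'] at h1
    exact zero_ne_one h1
  have hg0 : g ≠ 0 := by
    intro h0
    rw [h0, zero_pow hNpos.ne'] at hg
    exact (mul_ne_zero hζ0 ha) hg.symm
  have htor : IsOfFinOrder (Units.mk0 ζ hζ0)⁻¹ := by
    apply IsOfFinOrder.inv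
    rw [← tor_unit_iff]
    exact hζ
  have hab : a = (((Units.mk0 ζ hζ0)⁻¹ : Fˣ) : F) * ((Units.mk0 g hg0 : Fˣ) : F) ^ N := by
    rw [Units.val_inv_eq_inv_val, Units.val_mk0, Units.val_mk0]
    field_simp
    linear_combination -hg
  exact good_heredity_core ha hNpos htor hab hmax

end Stmt9Aux

/-- For a field with only finitely many roots of unity, rootless, rootless modtor, and good
heredity of all linear polynomials (with acceptable roots) are equivalent. -/


theorem stmt9 {F : Type*} [Field F] (h : {a : F | IsRootOfUnityElem a}.Finite) :
    (RootlessField F ↔ RootlessModtorField F) ∧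
    (RootlessModtorField F ↔
      ∀ a : F, a ≠ 0 → ¬ IsRootOfUnityElem a → HasGoodHeredity (X - C a)) := by
  refine ⟨⟨Stmt9Aux.modtor_of_rootless h, Stmt9Aux.rootless_of_modtor⟩, ?_, ?_⟩
  · intro hrm a ha hator
    exact Stmt9Aux.good_heredity_of_modtor ha hator (hrm a ha hator)
  · intro hgh
    exact Stmt9Aux.modtor_of_rootless h (Stmt9Aux.rootless_of_good_heredity hgh)
end

section
/- Let F be a field, let σ be any set of variables, and let E be the fraction field of the polynomial ring F[X_s : s ∈ σ] (so E is a purely transcendental extension of F). If F is rootless then E is rootless, and if F is rootless modtor then E is rootless modtor. -/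
open Polynomial

section StmtAux
variable {F : Type*} [Field F] {σ : Type*}

local notation "R" => MvPolynomial σ F
local notation "E" => FractionRing (MvPolynomial σ F)

private lemma stmt11_unitC_fin :
    ∀ (n : ℕ) (p : MvPolynomial (Fin n) F), IsUnit p → ∃ c : F, p = MvPolynomial.C c := by
  intro n
  induction n with
  | zero => intro p _; exact ⟨_, (MvPolynomial.eq_C_of_isEmpty p)⟩
  | succ n ih =>
    intro p hp
    have h2 : IsUnit (MvPolynomial.finSuccEquiv F n p) := hp.map _
    obtain ⟨r, hr, hrp⟩ := Polynomial.isUnit_iff.mp h2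
    obtain ⟨c, rfl⟩ := ih r hr
    refine ⟨c, ?_⟩
    have : (MvPolynomial.finSuccEquiv F n) (MvPolynomial.C c) =
        Polynomial.C (MvPolynomial.C c) := by
      simp [MvPolynomial.finSuccEquiv_apply]
    exact (MvPolynomial.finSuccEquiv F n).injective (by rw [this, hrp])

private lemma stmt11_unit_eq_C (y : MvPolynomial σ F) (h : IsUnit y) :
    ∃ c : F, y = MvPolynomial.C c := by
  obtain ⟨s, p, rfl⟩ := MvPolynomial.exists_finset_rename y
  have hp : IsUnit p := by
    have := h.map (MvPolynomial.killCompl (Subtype.coe_injective (p := (· ∈ s))))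
    rwa [MvPolynomial.killCompl_rename_app] at this
  set e := MvPolynomial.renameEquiv F (Fintype.equivFin {x // x ∈ s})
  obtain ⟨c, hc⟩ := stmt11_unitC_fin (Fintype.card {x // x ∈ s}) (e p) (hp.map e)
  have : p = MvPolynomial.C c := by
    have := congrArg e.symm hc
    simpa [e, MvPolynomial.renameEquiv] using this
  exact ⟨c, by rw [this, MvPolynomial.rename_C]⟩

/-- The canonical embedding of `F` into the fraction field of `F[Xₛ]`. -/
noncomputable def stmt11φ (F : Type*) [Field F] (σ : Type*) :
    F →+* FractionRing (MvPolynomial σ F) :=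
  (algebraMap (MvPolynomial σ F) (FractionRing (MvPolynomial σ F))).comp MvPolynomial.C

local notation "φ" => stmt11φ F σ

set_option synthInstance.maxHeartbeats 1000000 in
private lemma stmt11_descend (x : E) {n : ℕ} (hn : 0 < n) (z : F) (hx : x ^ n = φ z) :
    ∃ c : F, x = φ c := by
  rcases eq_or_ne z 0 with rfl | hz
  · refine ⟨0, ?_⟩
    rw [map_zero] at hx ⊢
    exact pow_eq_zero_iff hn.ne' |>.mp hx
  · have hint : IsIntegral R (x ^ n) := by
      rw [hx]; exact isIntegral_algebraMap (x := MvPolynomial.C z)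
    obtain ⟨y, hy⟩ := IsIntegrallyClosed.exists_algebraMap_eq_of_isIntegral_pow hn hint
    have hyn : algebraMap R E (y ^ n) = algebraMap R E (MvPolynomial.C z) := by
      rw [map_pow, hy, hx]; rfl
    have hinj : Function.Injective (algebraMap R E) := IsFractionRing.injective R E
    have hyz : y ^ n = MvPolynomial.C z := hinj hyn
    have hu : IsUnit y := by
      have h1 : IsUnit (y ^ n) := by
        rw [hyz]; exact (Ne.isUnit hz).map MvPolynomial.C
      exact isUnit_of_dvd_unit (dvd_pow_self y hn.ne') h1
    obtain ⟨c, rfl⟩ := stmt11_unit_eq_C y hu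
    exact ⟨c, hy.symm⟩

set_option maxHeartbeats 2000000 in
set_option synthInstance.maxHeartbeats 1000000 in
private lemma stmt11_keyB (a : E) (ha0 : a ≠ 0) (ha : a ∉ Set.range φ) :
    {n : ℕ | 0 < n ∧ ∃ z g : E, (∃ w : F, z = φ w) ∧ z ≠ 0 ∧ g ^ n = z * a}.Finite := by
  have hinj : Function.Injective (algebraMap R E) := IsFractionRing.injective R E
  obtain ⟨r, s, hcop, hmk⟩ := IsFractionRing.exists_reduced_fraction R a
  have hs0 : (s : R) ≠ 0 := nonZeroDivisors.coe_ne_zero s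
  have hsE : algebraMap R E (s : R) ≠ 0 :=
    IsFractionRing.to_map_ne_zero_of_mem_nonZeroDivisors s.2
  have hadiv : a = algebraMap R E r / algebraMap R E (s : R) := by
    rw [← hmk, IsFractionRing.mk'_eq_div]
  have hr0 : r ≠ 0 := by
    rintro rfl; apply ha0; rw [hadiv]; simp
  have hnu : ¬ (IsUnit r ∧ IsUnit (s : R)) := by
    rintro ⟨hur, hus⟩
    obtain ⟨c, rfl⟩ := stmt11_unit_eq_C r hur
    obtain ⟨d, hd⟩ := stmt11_unit_eq_C (s : R) hus
    have hd0 : d ≠ 0 := by rintro rfl; exact hs0 (by rw [hd, map_zero])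
    exact ha ⟨c / d, by rw [hadiv, hd, map_div₀]; rfl⟩
  obtain ⟨p, hpirr, hpdvd⟩ : ∃ p : R, Irreducible p ∧ (p ∣ r ∨ p ∣ (s : R)) := by
    by_cases hur : IsUnit r
    · have hus : ¬ IsUnit (s : R) := fun h => hnu ⟨hur, h⟩
      obtain ⟨p, h1, h2⟩ := WfDvdMonoid.exists_irreducible_factor hus hs0
      exact ⟨p, h1, Or.inr h2⟩
    · obtain ⟨p, h1, h2⟩ := WfDvdMonoid.exists_irreducible_factor hur hr0
      exact ⟨p, h1, Or.inl h2⟩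
  have hp : Prime p := hpirr.prime
  have hfr : FiniteMultiplicity p r := FiniteMultiplicity.of_not_isUnit hp.not_isUnit hr0
  have hfs : FiniteMultiplicity p (s : R) := FiniteMultiplicity.of_not_isUnit hp.not_isUnit hs0
  set N : ℕ := multiplicity p r + multiplicity p (s : R) with hN
  have hN1 : 1 ≤ N := by
    rcases hpdvd with h | h
    · have := hfr.le_multiplicity_of_pow_dvd (k := 1) (by simpa using h)
      omega
    · have := hfs.le_multiplicity_of_pow_dvd (k := 1) (by simpa using h)
      omega
  have hor : multiplicity p r = 0 ∨ multiplicity p (s : R) = 0 := by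
    by_cases h : p ∣ r
    · right
      exact multiplicity_eq_zero.mpr fun hdvd => hp.not_unit (hcop h hdvd)
    · left; exact multiplicity_eq_zero.mpr h
  apply Set.Finite.subset (Set.finite_Icc 1 N)
  rintro n ⟨hn, z, g, ⟨w, rfl⟩, hz0, hg⟩
  obtain ⟨c, d, hdmem, hgd⟩ := IsFractionRing.div_surjective (A := R) g
  have hd0 : d ≠ 0 := mem_nonZeroDivisors_iff_ne_zero.mp hdmem
  have hdE : algebraMap R E d ≠ 0 :=
    IsFractionRing.to_map_ne_zero_of_mem_nonZeroDivisors hdmem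
  have hw0 : w ≠ 0 := by rintro rfl; exact hz0 (map_zero _)
  have hg0 : g ≠ 0 := by
    intro h
    rw [h, zero_pow hn.ne'] at hg
    rcases mul_eq_zero.mp hg.symm with h' | h'
    · exact hz0 h'
    · exact ha0 h'
  have hc0 : c ≠ 0 := by
    rintro rfl; apply hg0; rw [← hgd]; simp
  have hfc : FiniteMultiplicity p c := FiniteMultiplicity.of_not_isUnit hp.not_isUnit hc0
  have hfd : FiniteMultiplicity p d := FiniteMultiplicity.of_not_isUnit hp.not_isUnit hd0
  have hE' : algebraMap R E (c ^ n * (s : R)) =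
      algebraMap R E (MvPolynomial.C w * (r * d ^ n)) := by
    simp only [map_mul, map_pow]
    have hzw : (φ w : E) = algebraMap R E (MvPolynomial.C w) := rfl
    rw [← hgd, hadiv, hzw] at hg
    rw [div_pow, mul_div_assoc', div_eq_div_iff (pow_ne_zero _ hdE) hsE] at hg
    linear_combination hg
  have hR : c ^ n * (s : R) = MvPolynomial.C w * (r * d ^ n) := hinj hE'
  have hCw : ¬ p ∣ MvPolynomial.C w := fun h =>
    hp.not_unit (isUnit_of_dvd_unit h ((Ne.isUnit hw0).map MvPolynomial.C))
  have hemul := congrArg (emultiplicity p) hR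
  rw [emultiplicity_mul hp, emultiplicity_mul hp, emultiplicity_mul hp,
    emultiplicity_pow hp, emultiplicity_pow hp, emultiplicity_eq_zero.mpr hCw, zero_add,
    hfc.emultiplicity_eq_multiplicity, hfs.emultiplicity_eq_multiplicity,
    hfr.emultiplicity_eq_multiplicity, hfd.emultiplicity_eq_multiplicity] at hemul
  have hnat : n * multiplicity p c + multiplicity p (s : R) =
      multiplicity p r + n * multiplicity p d := by
    exact_mod_cast hemul
  have hdvdN : n ∣ N := by
    rcases hor with h | h
    · rw [h, zero_add] at hnat
      have h2 : multiplicity p (s : R) = n * multiplicity p d - n * multiplicity p c :=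
        Nat.eq_sub_of_add_eq' hnat
      have h3 : n ∣ multiplicity p (s : R) :=
        h2 ▸ Nat.dvd_sub (dvd_mul_right n _) (dvd_mul_right n _)
      rw [hN, h, zero_add]; exact h3
    · rw [h, add_zero] at hnat
      have h2 : multiplicity p r = n * multiplicity p c - n * multiplicity p d :=
        Nat.eq_sub_of_add_eq hnat.symm
      have h3 : n ∣ multiplicity p r :=
        h2 ▸ Nat.dvd_sub (dvd_mul_right n _) (dvd_mul_right n _)
      rw [hN, h, add_zero]; exact h3
  exact ⟨hn, Nat.le_of_dvd (by omega) hdvdN⟩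

end StmtAux

section StmtMain
variable {F : Type*} [Field F] {σ : Type*}

local notation "R" => MvPolynomial σ F
local notation "E" => FractionRing (MvPolynomial σ F)
local notation "φ" => stmt11φ F σ

private lemma stmt11_phi_inj : Function.Injective (φ : F →+* E) :=
  (stmt11φ F σ).injective

end StmtMain

/-- Purely transcendental extensions preserve rootlessness and rootless-modtorness. -/
theorem stmt11 {F : Type*} [Field F] (σ : Type*) :
    (RootlessField F → RootlessField (FractionRing (MvPolynomial σ F))) ∧
    (RootlessModtorField F → RootlessModtorField (FractionRing (MvPolynomial σ F))) := by
  set φ := stmt11φ F σ with hφ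
  have hφinj : Function.Injective φ := (stmt11φ F σ).injective
  constructor
  · intro hF a ha0 hator
    by_cases hmem : a ∈ Set.range φ
    · obtain ⟨u, rfl⟩ := hmem
      have hu0 : u ≠ 0 := by rintro rfl; exact ha0 (map_zero _)
      have hut : ¬ IsRootOfUnityElem u := by
        rintro ⟨m, hm, hum⟩
        exact hator ⟨m, hm, by rw [← map_pow, hum, map_one]⟩
      apply Set.Finite.subset (hF u hu0 hut)
      rintro n ⟨hn, x, hx⟩
      obtain ⟨c, rfl⟩ := stmt11_descend x hn u hx
      exact ⟨hn, c, hφinj (by rw [map_pow]; exact hx)⟩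
    · apply Set.Finite.subset (stmt11_keyB a ha0 hmem)
      rintro n ⟨hn, x, hx⟩
      exact ⟨hn, 1, x, ⟨1, (map_one φ).symm⟩, one_ne_zero, by rw [hx, one_mul]⟩
  · intro hF a ha0 hator
    by_cases hmem : a ∈ Set.range φ
    · obtain ⟨u, rfl⟩ := hmem
      have hu0 : u ≠ 0 := by rintro rfl; exact ha0 (map_zero _)
      have hut : ¬ IsRootOfUnityElem u := by
        rintro ⟨m, hm, hum⟩
        exact hator ⟨m, hm, by rw [← map_pow, hum, map_one]⟩
      apply Set.Finite.subset (hF u hu0 hut)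
      rintro n ⟨hn, ζ, g, ⟨m, hm, hζm⟩, hg⟩
      obtain ⟨w, rfl⟩ := stmt11_descend ζ hm 1 (by rw [hζm, map_one])
      obtain ⟨c, rfl⟩ := stmt11_descend g hn (w * u) (by rw [hg, map_mul])
      refine ⟨hn, w, c, ⟨m, hm, hφinj (by rw [map_pow, hζm, map_one])⟩,
        hφinj (by rw [map_pow, map_mul]; exact hg)⟩
    · apply Set.Finite.subset (stmt11_keyB a ha0 hmem)
      rintro n ⟨hn, ζ, g, ⟨m, hm, hζm⟩, hg⟩
      have hζ0 : ζ ≠ 0 := by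
        rintro rfl; rw [zero_pow hm.ne'] at hζm; exact zero_ne_one hζm
      obtain ⟨w, hw⟩ := stmt11_descend ζ hm 1 (by rw [hζm, map_one])
      exact ⟨hn, ζ, g, ⟨w, hw⟩, hζ0, hg⟩
end

section
/- For every prime p, the field ℚ_p of p-adic numbers is not rootless and does not have good heredity. More precisely, there exists α ∈ ℚ_p with α ≡ 1 modulo p, α not a root of unity, such that for every positive integer r not divisible by p the equation x^r = α has a solution in ℚ_p. -/
open Polynomial

/-- Hensel's lemma gives `r`-th roots of `1 + p` in `ℚ_p` for `r` prime to `p`. -/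
lemma padic_root (p : ℕ) [Fact p.Prime] (r : ℕ) (hpr : ¬ (p:ℕ) ∣ r) :
    ∃ x : ℚ_[p], x ^ r = 1 + p := by
  have hp := (Fact.out : p.Prime)
  set F : Polynomial ℤ_[p] := X ^ r - C (1 + p : ℤ_[p]) with hF
  have heval : F.eval 1 = -p := by simp [hF]
  have hderiv : F.derivative.eval 1 = r := by
    simp [hF, Polynomial.derivative_X_pow]
  have hnormr : ‖(r : ℤ_[p])‖ = 1 := by
    refine le_antisymm (PadicInt.norm_le_one _) ?_
    by_contra h
    push_neg at h
    have := (PadicInt.norm_int_lt_one_iff_dvd (r : ℤ)).mp (by exact_mod_cast h)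
    exact hpr (by exact_mod_cast this)
  have hnorm : ‖F.eval 1‖ < ‖F.derivative.eval 1‖ ^ 2 := by
    rw [heval, hderiv, hnormr, one_pow, norm_neg]
    have : ‖(p : ℤ_[p])‖ < 1 := by
      rw [PadicInt.norm_p]
      exact inv_lt_one_of_one_lt₀ (by exact_mod_cast hp.one_lt)
    exact this
  obtain ⟨z, hz, -⟩ := hensels_lemma hnorm
  have hzr : z ^ r = 1 + p := by
    have : z ^ r - (1 + p) = 0 := by simpa [hF] using hz
    exact sub_eq_zero.mp this
  refine ⟨(z : ℚ_[p]), ?_⟩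
  have := congrArg (PadicInt.Coe.ringHom (p := p)) hzr
  push_cast at this ⊢
  exact_mod_cast this

lemma alpha_not_torsion (p : ℕ) [Fact p.Prime] : ¬ ∃ n : ℕ, 0 < n ∧ (1 + p : ℚ_[p]) ^ n = 1 := by
  rintro ⟨n, hn, h⟩
  have : ((1 + p : ℕ) : ℚ_[p]) ^ n = ((1 : ℕ) : ℚ_[p]) := by push_cast; exact_mod_cast h
  rw [← Nat.cast_pow] at this
  have h2 : (1 + p) ^ n = 1 := Nat.cast_injective this
  have hp := (Fact.out : p.Prime)
  have hplt := hp.one_lt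
  have : 1 < (1 + p) ^ n := Nat.one_lt_pow hn.ne' (by omega)
  omega

lemma alpha_ne_zero (p : ℕ) [Fact p.Prime] : (1 + p : ℚ_[p]) ≠ 0 := by
  have : ((1 + p : ℕ) : ℚ_[p]) ≠ 0 := Nat.cast_ne_zero.mpr (by omega)
  push_cast at this; exact_mod_cast this

/-- `ℚ_p` is not rootless and not of good heredity: there is `α ≡ 1 mod p`, not a root of
unity, admitting `r`-th roots for every positive `r` prime to `p`. -/
theorem stmt16 (p : ℕ) [Fact p.Prime] :
    ¬ RootlessField ℚ_[p] ∧ ¬ GoodHeredityField ℚ_[p] ∧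
    ∃ α : ℚ_[p], ‖α - 1‖ < 1 ∧ ¬ IsRootOfUnityElem α ∧
      ∀ r : ℕ, 0 < r → ¬ (p : ℕ) ∣ r → ∃ x : ℚ_[p], x ^ r = α := by
  have hp := (Fact.out : p.Prime)
  have hppos := hp.pos
  have hp1 := hp.one_lt
  set α : ℚ_[p] := 1 + p with hα
  have hroots : ∀ r : ℕ, 0 < r → ¬ (p : ℕ) ∣ r → ∃ x : ℚ_[p], x ^ r = α :=
    fun r _ hpr => padic_root p r hpr
  have hne : α ≠ 0 := alpha_ne_zero p
  have htor : ¬ IsRootOfUnityElem α := alpha_not_torsion p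
  refine ⟨?_, ?_, α, ?_, htor, hroots⟩
  · -- not rootless
    intro h
    have hfin := h α hne htor
    refine (Set.infinite_of_injective_forall_mem
      (f := fun k : ℕ => k * p + 1) ?_ ?_) hfin
    · intro a b hab
      simp only at hab
      exact Nat.eq_of_mul_eq_mul_right hppos (by omega)
    · intro k
      refine ⟨Nat.succ_pos _, ?_⟩
      refine hroots _ (Nat.succ_pos _) ?_
      rintro ⟨c, hc⟩
      rcases le_or_gt c k with h1 | h1 <;> nlinarith
  · -- not good heredity
    intro h
    have hP : ∀ b : AlgebraicClosure ℚ_[p],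
        Polynomial.aeval b (X - C α) = 0 → b ≠ 0 ∧ ¬ IsRootOfUnityElem b := by
      intro b hb
      simp only [map_sub, aeval_X, aeval_C] at hb
      have hbeq : b = algebraMap ℚ_[p] _ α := sub_eq_zero.mp hb
      constructor
      · rw [hbeq]
        intro hz
        exact hne ((algebraMap ℚ_[p] (AlgebraicClosure ℚ_[p])).injective
          (by rw [hz, map_zero]))
      · rintro ⟨n, hn, hbn⟩
        apply htor
        refine ⟨n, hn, ?_⟩
        rw [hbeq, ← map_pow] at hbn
        have : algebraMap ℚ_[p] (AlgebraicClosure ℚ_[p]) (α ^ n) = algebraMap ℚ_[p] _ 1 := by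
          rw [hbn, map_one]
        exact (algebraMap ℚ_[p] (AlgebraicClosure ℚ_[p])).injective this
    obtain ⟨n, hn, l, hl, hprod⟩ := h (X - C α) hP
    rw [sub_comp, X_comp, C_comp] at hprod
    -- hprod : X ^ n - C α = l.prod
    set r := n * p + 1 with hr
    obtain ⟨β, hβ⟩ := hroots r (by omega) (by
      rintro ⟨c, hc⟩
      rcases le_or_gt c n with h1 | h1 <;> nlinarith)
    have hXnβ : (X : ℚ_[p][X]) ^ n - C β ≠ 0 := X_pow_sub_C_ne_zero hn β
    have hXnβu : ¬ IsUnit ((X : ℚ_[p][X]) ^ n - C β) := by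
      apply not_isUnit_of_natDegree_pos
      rw [natDegree_X_pow_sub_C]; exact hn
    obtain ⟨d, hd, hdvd⟩ := WfDvdMonoid.exists_irreducible_factor hXnβu hXnβ
    have hdvd2 : d ∣ (l.map (fun Q => Q.comp (X ^ r))).prod := by
      rw [← multiset_prod_comp, ← hprod, sub_comp, pow_comp, X_comp]
      have key : (X : ℚ_[p][X]) ^ n - C β ∣ ((X : ℚ_[p][X]) ^ n) ^ r - (C β) ^ r :=
        sub_dvd_pow_sub_pow _ _ r
      rw [← C_pow, hβ] at key
      refine hdvd.trans ?_
      rw [C_comp]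
      convert key using 2
      rw [← pow_mul, ← pow_mul, mul_comm]
    obtain ⟨Q', hQ'mem, hQ'dvd⟩ := hd.prime.exists_mem_multiset_dvd hdvd2
    obtain ⟨Q, hQmem, rfl⟩ := Multiset.mem_map.mp hQ'mem
    have hQh := hl Q hQmem
    have hQirr : Irreducible (Q.comp (X ^ r)) := hQh r (by omega)
    have hassoc := hd.associated_of_dvd hQirr hQ'dvd
    have hdeg : d.natDegree = Q.natDegree * r := by
      rw [natDegree_eq_of_degree_eq (degree_eq_degree_of_associated hassoc),
        natDegree_comp, natDegree_X_pow]
    have hdle : d.natDegree ≤ n := by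
      have := natDegree_le_of_dvd hdvd hXnβ
      rwa [natDegree_X_pow_sub_C] at this
    have hQpos : 0 < Q.natDegree := by
      have : Irreducible (Q.comp (X ^ 1)) := hQh 1 one_pos
      rw [pow_one, comp_X] at this
      exact this.natDegree_pos
    have hrle : r ≤ Q.natDegree * r := Nat.le_mul_of_pos_left r hQpos
    rw [← hdeg] at hrle
    have hnp : n ≤ n * p := Nat.le_mul_of_pos_right n hppos
    omega
  · -- norm
    have h1 : α - 1 = (p : ℚ_[p]) := by rw [hα]; ring
    rw [h1]
    exact Padic.norm_p_lt_one
end
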